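/- arXiv:2506.05861 — 3 statements merged into one kernel-verified Lean document; each statement's English description precedes it below -/
import Mathlib

section
/- The adjacency matrix of the dodecahedron graph has no eigenvalue in the open interval (-2, 0). -/
/-- The dodecahedron graph, realized as the generalized Petersen graph $GP(10,2)$:
outer vertices `(0, i)` form a 10-cycle, inner vertices `(1, i)` satisfy
`(1, i) ~ (1, i+2)`, and `(0, i) ~ (1, i)` are the spokes. -/
def dodecahedron : SimpleGraph (Fin 2 × Fin 10) :=
  SimpleGraph.fromRel (fun a b =>
    (a.1 = 0 ∧ b.1 = 0 ∧ b.2 = a.2 + 1) ∨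
    (a.1 = 0 ∧ b.1 = 1 ∧ a.2 = b.2) ∨
    (a.1 = 1 ∧ b.1 = 1 ∧ b.2 = a.2 + 2))

instance : DecidableRel dodecahedron.Adj := fun a b =>
  inferInstanceAs (Decidable (a ≠ b ∧ _))

open Matrix

/-- Index map from the vertex set to `Fin 20`. -/
def fi : Fin 2 × Fin 10 → Fin 20 := fun p => ⟨p.1.1 * 10 + p.2.1, by omega⟩

/-- Integer factor `M` of the scaled decomposition `1053360 • (A² + 2A) = M D Mᵀ`. -/
def M20 : Matrix (Fin 20) (Fin 20) ℤ :=
  !![3, 0, 0, 0, 0, 0, 0, 0, 0, 0, 0, 0, 0, 0, 0, 0, 0, 0, 0, 0;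
  2, 5, 0, 0, 0, 0, 0, 0, 0, 0, 0, 0, 0, 0, 0, 0, 0, 0, 0, 0;
  1, 4, 8, 0, 0, 0, 0, 0, 0, 0, 0, 0, 0, 0, 0, 0, 0, 0, 0, 0;
  0, 3, 6, 6, 0, 0, 0, 0, 0, 0, 0, 0, 0, 0, 0, 0, 0, 0, 0, 0;
  0, 0, 5, 5, 8, 0, 0, 0, 0, 0, 0, 0, 0, 0, 0, 0, 0, 0, 0, 0;
  0, 0, 0, 4, 7, 21, 0, 0, 0, 0, 0, 0, 0, 0, 0, 0, 0, 0, 0, 0;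
  0, 0, 0, 0, 6, 18, 9, 0, 0, 0, 0, 0, 0, 0, 0, 0, 0, 0, 0, 0;
  0, 0, 0, 0, 0, 16, 8, 11, 0, 0, 0, 0, 0, 0, 0, 0, 0, 0, 0, 0;
  1, -2, 1, 1, -2, 2, 8, 8, 19, 0, 0, 0, 0, 0, 0, 0, 0, 0, 0, 0;
  2, -1, -2, 2, -1, -3, 2, 8, 8, 3, 0, 0, 0, 0, 0, 0, 0, 0, 0, 0;
  2, -1, 3, -1, -1, 5, -1, -1, 10, -1, 1, 0, 0, 0, 0, 0, 0, 0, 0, 0;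
  1, 4, -2, 2, -1, -3, 2, -1, -1, 2, 0, 1, 0, 0, 0, 0, 0, 0, 0, 0;
  1, 1, 7, -1, 2, -2, -1, 2, -9, -1, 1, 0, 1, 0, 0, 0, 0, 0, 0, 0;
  0, 3, 1, 5, -1, 5, -1, -1, 10, -1, 0, 1, 0, 1, 0, 0, 0, 0, 0, 0;
  0, 0, 5, 1, 7, -3, 2, -1, -1, 2, 1, 0, 0, 0, 1, 0, 0, 0, 0, 0;
  0, 0, 0, 4, 1, 19, -1, 2, -9, -1, 0, 1, 0, 0, 0, 1, 0, 0, 0, 0;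
  0, 0, 0, 0, 6, 2, 8, -1, 10, -1, 1, 0, 0, 0, 0, 0, 1, 0, 0, 0;
  0, 0, 0, 0, 0, 16, 1, 10, -1, 2, 0, 1, 0, 0, 0, 0, 0, 1, 0, 0;
  1, -2, 1, 1, -2, 2, 8, -1, 10, -1, 1, 0, 0, 0, 0, 0, 0, 0, 1, 0;
  1, 1, -3, 1, 1, -5, 1, 10, -1, 2, 0, 1, 0, 0, 0, 0, 0, 0, 0, 1]

/-- Diagonal (nonnegative) entries of the scaled decomposition. -/
def e20 : Fin 20 → ℤ := ![351120, 70224, 26334, 43890, 21945, 3135, 16720, 10640, 1680, 55440, 1053360, 1053360, 0, 0, 0, 0, 0, 0, 0, 0]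

def Mz : Matrix (Fin 2 × Fin 10) (Fin 2 × Fin 10) ℤ := fun p r => M20 (fi p) (fi r)
def ez : Fin 2 × Fin 10 → ℤ := fun p => e20 (fi p)
def Az : Matrix (Fin 2 × Fin 10) (Fin 2 × Fin 10) ℤ := dodecahedron.adjMatrix ℤ

set_option maxRecDepth 1000000 in
lemma key_int : ∀ i j, ((1053360 : ℤ) • (Az * Az + Az + Az)) i j =
    (Mz * Matrix.diagonal ez * Mz.transpose) i j := by
  decide

lemma key_int' : (1053360 : ℤ) • (Az * Az + Az + Az) =
    Mz * Matrix.diagonal ez * Mz.transpose :=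
  Matrix.ext fun i j => key_int i j

lemma eznn : ∀ p, 0 ≤ ez p := by decide

lemma mapA : dodecahedron.adjMatrix ℝ = Az.map (Int.cast : ℤ → ℝ) := by
  ext i j
  simp only [Az, Matrix.map_apply, SimpleGraph.adjMatrix_apply]
  split_ifs <;> simp

noncomputable def phi : Matrix (Fin 2 × Fin 10) (Fin 2 × Fin 10) ℤ →+*
    Matrix (Fin 2 × Fin 10) (Fin 2 × Fin 10) ℝ :=
  (Int.castRingHom ℝ).mapMatrix

lemma key_real :
    (1053360 : ℝ) • (dodecahedron.adjMatrix ℝ * dodecahedron.adjMatrix ℝ +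
        dodecahedron.adjMatrix ℝ + dodecahedron.adjMatrix ℝ) =
      Mz.map (Int.cast : ℤ → ℝ) * Matrix.diagonal (fun p => ((ez p : ℤ) : ℝ)) *
        (Mz.map (Int.cast : ℤ → ℝ)).transpose := by
  have h := congrArg phi key_int'
  simp only [phi, map_zsmul, _root_.map_mul, _root_.map_add, RingHom.mapMatrix_apply] at h
  rw [← Int.cast_smul_eq_zsmul ℝ] at h
  rw [show ((Int.castRingHom ℝ) : ℤ → ℝ) = (Int.cast : ℤ → ℝ) from rfl] at h
  rw [Matrix.diagonal_map (by simp), Matrix.transpose_map] at h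
  rw [mapA]
  convert h using 2
  norm_num

lemma psd :
    ((1053360 : ℝ) • (dodecahedron.adjMatrix ℝ * dodecahedron.adjMatrix ℝ +
        dodecahedron.adjMatrix ℝ + dodecahedron.adjMatrix ℝ)).PosSemidef := by
  rw [key_real]
  have hd : (Matrix.diagonal fun p => ((ez p : ℤ) : ℝ)).PosSemidef :=
    Matrix.posSemidef_diagonal_iff.mpr fun p => by exact_mod_cast eznn p
  have h := hd.mul_mul_conjTranspose_same (Mz.map (Int.cast : ℤ → ℝ))
  rwa [Matrix.conjTranspose_eq_transpose_of_trivial] at h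

theorem stmt_7 :
    ∀ μ ∈ Set.Ioo (-2 : ℝ) 0, μ ∉ spectrum ℝ (dodecahedron.adjMatrix ℝ) := by
  rintro μ ⟨h1, h2⟩ hs
  set A := dodecahedron.adjMatrix ℝ with hA
  rw [← AlgEquiv.spectrum_eq
    (Matrix.toLinAlgEquiv' : Matrix (Fin 2 × Fin 10) (Fin 2 × Fin 10) ℝ ≃ₐ[ℝ] _) A] at hs
  obtain ⟨v, hv⟩ := (Module.End.hasEigenvalue_iff_mem_spectrum.mpr hs).exists_hasEigenvector
  have hAv : A *ᵥ v = μ • v := by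
    have h := hv.apply_eq_smul
    rwa [show (Matrix.toLinAlgEquiv' A : (Fin 2 × Fin 10 → ℝ) →ₗ[ℝ] Fin 2 × Fin 10 → ℝ) v
      = A *ᵥ v from rfl] at h
  have hMv : ((1053360 : ℝ) • (A * A + A + A)) *ᵥ v = (1053360 * (μ ^ 2 + 2 * μ)) • v := by
    rw [Matrix.smul_mulVec, Matrix.add_mulVec, Matrix.add_mulVec, ← Matrix.mulVec_mulVec,
      hAv, Matrix.mulVec_smul, hAv]
    module
  have hq := psd.dotProduct_mulVec_nonneg v
  rw [star_trivial, hMv, dotProduct_smul, smul_eq_mul] at hq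
  have hdp : 0 < dotProduct v v := by
    rcases lt_or_eq_of_le ((dotProduct_self_star_nonneg v).trans_eq
      (by rw [star_trivial]) : (0:ℝ) ≤ dotProduct v v) with h | h
    · exact h
    · exact absurd (dotProduct_self_eq_zero.mp h.symm) hv.2
  have hneg : μ ^ 2 + 2 * μ < 0 := by nlinarith
  nlinarith [mul_pos (neg_pos.mpr hneg) hdp]
end

section
/- Let G be a cubic graph of girth 5 whose adjacency matrix has no eigenvalue in (-2,0), let C be a 5-cycle in G with vertices u₀,…,u₄ and pendant neighbours v₀,…,v₄ (vᵢ the neighbour of uᵢ off C). Then no vᵢ can have both of its remaining two neighbours outside the set {u₀,…,u₄,v₀,…,v₄} with each of those neighbours having no other neighbour among v₀,…,v₄. Equivalently: if w₀, w₁ are the two neighbours of v₀ other than u₀, and neither w₀ nor w₁ is adjacent to any of v₁,…,v₄, then the 8×8 principal submatrix of A²+2A indexed by {u₀,u₁,u₂,u₃,u₄,v₀,w₀,w₁} has determinant -4, contradicting positive semidefiniteness. -/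
open SimpleGraph Matrix Finset

theorem stmt_10 {V : Type*} [Fintype V] [DecidableEq V]
    (G : SimpleGraph V) [DecidableRel G.Adj]
    (hreg : G.IsRegularOfDegree 3) (hg : G.egirth = 5)
    (hspec : ∀ μ ∈ Set.Ioo (-2 : ℝ) 0, μ ∉ spectrum ℝ (G.adjMatrix ℝ))
    (u v : Fin 5 → V)
    (hu : Function.Injective u) (hc : ∀ i, G.Adj (u i) (u (i + 1)))
    (hv : ∀ i, G.Adj (u i) (v i)) (hvu : ∀ i j, v i ≠ u j)
    (w₀ w₁ : V) (hw : w₀ ≠ w₁)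
    (hw₀ : G.Adj (v 0) w₀) (hw₁ : G.Adj (v 0) w₁)
    (hw₀u : ∀ j, w₀ ≠ u j) (hw₁u : ∀ j, w₁ ≠ u j)
    (hw₀v : ∀ j, w₀ ≠ v j) (hw₁v : ∀ j, w₁ ≠ v j)
    (hnadj₀ : ∀ j, j ≠ 0 → ¬ G.Adj w₀ (v j))
    (hnadj₁ : ∀ j, j ≠ 0 → ¬ G.Adj w₁ (v j)) :
    (letI A : Matrix V V ℝ := G.adjMatrix ℝ
     letI M := A ^ 2 + 2 • A
     letI T : Fin 8 → V := ![u 0, u 1, u 2, u 3, u 4, v 0, w₀, w₁]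
     (M.submatrix T T).det = -4) ∧ False := by
  have hgirth : ∀ (a : V) (w : G.Walk a a), w.IsCycle → 5 ≤ w.length := by
    intro a w hw'
    have h5 : (5:ℕ∞) ≤ G.egirth := le_of_eq hg.symm
    rw [SimpleGraph.le_egirth] at h5
    exact_mod_cast h5 a w hw'
  have key3 : ∀ a b c : V, G.Adj a b → G.Adj b c → G.Adj c a → False := by
    intro a b c hab hbc hca
    have hcyc : (Walk.cons hab (Walk.cons hbc (Walk.cons hca Walk.nil))).IsCycle := by
      simp [Walk.isCycle_def, Walk.isTrail_def, hab.ne, hbc.ne, hca.ne, hab.ne', hbc.ne', hca.ne']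
    have := hgirth a _ hcyc
    simp at this
  have key4 : ∀ a b c d : V, G.Adj a b → G.Adj b c → G.Adj c d → G.Adj d a →
      a ≠ c → b ≠ d → False := by
    intro a b c d hab hbc hcd hda hac hbd
    have hcyc : (Walk.cons hab (Walk.cons hbc (Walk.cons hcd (Walk.cons hda Walk.nil)))).IsCycle := by
      simp [Walk.isCycle_def, Walk.isTrail_def, hab.ne, hbc.ne, hcd.ne, hda.ne,
        hab.ne', hbc.ne', hcd.ne', hda.ne', hac, hbd, hac.symm, hbd.symm, Ne.symm hac, Ne.symm hbd]
    have := hgirth a _ hcyc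
    simp at this
  have h41 : ∀ i : Fin 5, i + 4 + 1 = i := by decide
  have h31 : ∀ i : Fin 5, i + 3 + 1 = i + 4 := by decide
  have hnbr : ∀ x a b c : V, G.Adj x a → G.Adj x b → G.Adj x c → a ≠ b → a ≠ c → b ≠ c →
      G.neighborFinset x = {a, b, c} := by
    intro x a b c h1 h2 h3 hab hac hbc
    refine (Finset.eq_of_subset_of_card_le ?_ ?_).symm
    · intro z hz
      simp only [Finset.mem_insert, Finset.mem_singleton] at hz
      rcases hz with rfl | rfl | rfl <;> simpa [SimpleGraph.mem_neighborFinset]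
    · rw [SimpleGraph.card_neighborFinset_eq_degree, hreg x]
      rw [Finset.card_insert_of_notMem (by simp [hab, hac]), Finset.card_pair hbc]
  have adjuu : ∀ i j : Fin 5, G.Adj (u i) (u j) ↔ (j = i + 1 ∨ i = j + 1) := by
    intro i j
    constructor
    · intro h
      obtain ⟨k, rfl⟩ : ∃ k, j = i + k := ⟨j - i, by abel⟩
      have hk : k = 0 ∨ k = 1 ∨ k = 2 ∨ k = 3 ∨ k = 4 := by omega
      rcases hk with rfl | rfl | rfl | rfl | rfl
      · simp at h
      · left; rfl
      · exact absurd (key3 _ _ _ (hc i) (by simpa [add_assoc] using hc (i+1)) h.symm) not_false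
      · exact absurd (key3 _ _ _ (by simpa [h31] using hc (i+3))
          (by simpa [h41] using hc (i+4)) h) not_false
      · right; rw [h41]
    · rintro (rfl | rfl)
      · exact hc i
      · exact (hc j).symm
  have hprev : ∀ i : Fin 5, G.Adj (u i) (u (i+4)) := fun i => by
    have h := hc (i+4); rw [h41] at h; exact h.symm
  have vinj : Function.Injective v := by
    intro i j hij
    by_contra hne
    have h1 : G.Adj (u i) (v i) := hv i
    have h2 : G.Adj (u j) (v i) := hij ▸ hv j
    obtain ⟨k, rfl⟩ : ∃ k, j = i + k := ⟨j - i, by abel⟩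
    have hk : k = 1 ∨ k = 2 ∨ k = 3 ∨ k = 4 := by omega
    rcases hk with rfl | rfl | rfl | rfl
    · exact key3 _ _ _ (hc i) h2 h1.symm
    · exact key4 _ _ _ _ (hc i) (by simpa [add_assoc] using hc (i+1)) h2 h1.symm
        (hu.ne (by omega)) (hvu i (i+1)).symm
    · exact key4 _ _ _ _ (by simpa [h31] using hc (i+3)) (by simpa [h41] using hc (i+4))
        h1 h2.symm (hu.ne (by omega)) (hvu i (i+4)).symm
    · exact key3 _ _ _ (by simpa [h41] using hc (i+4)) h1 h2.symm
  have hNu : ∀ i, G.neighborFinset (u i) = {u (i+4), u (i+1), v i} := by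
    intro i
    refine hnbr _ _ _ _ (hprev i) (hc i) (hv i)
      (hu.ne (by omega)) (hvu i (i+4)).symm (hvu i (i+1)).symm
  have hN0 : G.neighborFinset (u 0) = {u 4, u 1, v 0} := by simpa using hNu 0
  have hN1 : G.neighborFinset (u 1) = {u 0, u 2, v 1} := by simpa using hNu 1
  have hN2 : G.neighborFinset (u 2) = {u 1, u 3, v 2} := by simpa using hNu 2
  have hN3 : G.neighborFinset (u 3) = {u 2, u 4, v 3} := by simpa using hNu 3
  have hN4 : G.neighborFinset (u 4) = {u 3, u 0, v 4} := by simpa using hNu 4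
  have hNv0 : G.neighborFinset (v 0) = {u 0, w₀, w₁} :=
    hnbr _ _ _ _ (hv 0).symm hw₀ hw₁ (hw₀u 0).symm (hw₁u 0).symm hw
  have nadj : ∀ x y a b c : V, G.neighborFinset x = {a,b,c} → y ≠ a → y ≠ b → y ≠ c →
      ¬ G.Adj x y := by
    intro x y a b c hN ha hb hc' hadj
    have : y ∈ G.neighborFinset x := by simpa [SimpleGraph.mem_neighborFinset] using hadj
    rw [hN] at this
    simp [ha, hb, hc'] at this
  have adjuv : ∀ i j : Fin 5, G.Adj (u i) (v j) ↔ j = i := by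
    intro i j
    constructor
    · intro h
      have hmem : v j ∈ G.neighborFinset (u i) := by
        simpa [SimpleGraph.mem_neighborFinset] using h
      rw [hNu i] at hmem
      simp only [Finset.mem_insert, Finset.mem_singleton] at hmem
      rcases hmem with h' | h' | h'
      · exact absurd h' (hvu j (i+4))
      · exact absurd h' (hvu j (i+1))
      · exact vinj h'
    · rintro rfl; exact hv j
  have adjvu : ∀ i j : Fin 5, G.Adj (v i) (u j) ↔ i = j := by
    intro i j; rw [G.adj_comm, adjuv]
  have adjvv0 : ∀ i, ¬ G.Adj (v i) (v 0) := by
    intro i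
    rcases eq_or_ne i 0 with rfl | hne
    · simp
    · rw [G.adj_comm]
      exact nadj _ _ _ _ _ hNv0 (hvu i 0) (Ne.symm (hw₀v i)) (Ne.symm (hw₁v i))
  have adjuw0 : ∀ i, ¬ G.Adj (u i) w₀ := fun i =>
    nadj _ _ _ _ _ (hNu i) (hw₀u (i+4)) (hw₀u (i+1)) (hw₀v i)
  have adjuw1 : ∀ i, ¬ G.Adj (u i) w₁ := fun i =>
    nadj _ _ _ _ _ (hNu i) (hw₁u (i+4)) (hw₁u (i+1)) (hw₁v i)
  have adjvw0 : ∀ i : Fin 5, (G.Adj (v i) w₀ ↔ i = 0) := by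
    intro i
    constructor
    · intro h
      by_contra hne
      exact hnadj₀ i hne h.symm
    · rintro rfl; exact hw₀
  have adjvw1 : ∀ i : Fin 5, (G.Adj (v i) w₁ ↔ i = 0) := by
    intro i
    constructor
    · intro h
      by_contra hne
      exact hnadj₁ i hne h.symm
    · rintro rfl; exact hw₁
  have hww : ¬ G.Adj w₀ w₁ := fun h => key3 _ _ _ hw₀ h hw₁.symm
  have hww' : ¬ G.Adj w₁ w₀ := fun h => hww h.symm
  have adjw0u : ∀ j, ¬ G.Adj w₀ (u j) := fun j h => adjuw0 j h.symm
  have adjw1u : ∀ j, ¬ G.Adj w₁ (u j) := fun j h => adjuw1 j h.symm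
  have hvw0 : G.Adj w₀ (v 0) := hw₀.symm
  have hvw1 : G.Adj w₁ (v 0) := hw₁.symm
  have hmul : ∀ x y a b c : V, G.neighborFinset x = {a,b,c} →
      (G.adjMatrix ℝ * G.adjMatrix ℝ) x y =
        G.adjMatrix ℝ a y + G.adjMatrix ℝ b y + G.adjMatrix ℝ c y := by
    intro x y a b c hN
    have hcard : ({a,b,c} : Finset V).card = 3 := by
      rw [← hN, SimpleGraph.card_neighborFinset_eq_degree, hreg x]
    have hab : a ≠ b := by
      rintro rfl
      rw [Finset.insert_idem] at hcard
      have h2 := Finset.card_insert_le a ({c} : Finset V)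
      rw [hcard, Finset.card_singleton] at h2; omega
    have hac : a ≠ c := by
      rintro rfl
      rw [Finset.insert_comm, Finset.pair_eq_singleton] at hcard
      have h2 := Finset.card_insert_le b ({a} : Finset V)
      rw [hcard, Finset.card_singleton] at h2; omega
    have hbc : b ≠ c := by
      rintro rfl
      rw [Finset.pair_eq_singleton] at hcard
      have h2 := Finset.card_insert_le a ({b} : Finset V)
      rw [hcard, Finset.card_singleton] at h2; omega
    rw [SimpleGraph.adjMatrix_mul_apply, hN, Finset.sum_insert (by simp [hab, hac]),
      Finset.sum_insert (by simp [hbc]), Finset.sum_singleton]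
    ring
  have hAs : ∀ x y : V, G.adjMatrix ℝ x y = G.adjMatrix ℝ y x := by
    intro x y; simp [SimpleGraph.adjMatrix_apply, G.adj_comm]
  have hsymAA : ∀ x y : V, (G.adjMatrix ℝ * G.adjMatrix ℝ) x y
      = (G.adjMatrix ℝ * G.adjMatrix ℝ) y x := by
    intro x y
    rw [Matrix.mul_apply, Matrix.mul_apply]
    exact Finset.sum_congr rfl fun z _ => by rw [hAs x z, hAs z y, mul_comm]
  have hdiagw : ∀ x : V, (G.adjMatrix ℝ * G.adjMatrix ℝ) x x = 3 := by
    intro x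
    rw [SimpleGraph.adjMatrix_mul_self_apply_self, hreg x]
    norm_num
  have hcross : (G.adjMatrix ℝ * G.adjMatrix ℝ) w₀ w₁ = 1 := by
    rw [Matrix.mul_apply]
    have hz : ∀ z : V, G.adjMatrix ℝ w₀ z * G.adjMatrix ℝ z w₁ = if z = v 0 then 1 else 0 := by
      intro z
      rcases eq_or_ne z (v 0) with rfl | hne
      · simp [SimpleGraph.adjMatrix_apply, hvw0, hw₁]
      · rw [if_neg hne]
        by_cases h0 : G.Adj w₀ z
        · by_cases h1 : G.Adj z w₁
          · exact absurd (key4 w₀ z w₁ (v 0) h0 h1 hw₁.symm hw₀ hw hne) not_false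
          · simp [SimpleGraph.adjMatrix_apply, h1]
        · simp [SimpleGraph.adjMatrix_apply, h0]
    rw [Finset.sum_congr rfl fun z _ => hz z]
    simp
  -- the 8×8 principal submatrix
  have hE : ((G.adjMatrix ℝ) ^ 2 + 2 • (G.adjMatrix ℝ)).submatrix
      ![u 0, u 1, u 2, u 3, u 4, v 0, w₀, w₁] ![u 0, u 1, u 2, u 3, u 4, v 0, w₀, w₁] =
      !![3,2,1,1,2,2,1,1; 2,3,2,1,1,1,0,0; 1,2,3,2,1,0,0,0; 1,1,2,3,2,0,0,0;
         2,1,1,2,3,1,0,0; 2,1,0,0,1,3,2,2; 1,0,0,0,0,2,3,1; 1,0,0,0,0,2,1,3] := by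
    ext i j
    fin_cases i <;> fin_cases j
    · show ((G.adjMatrix ℝ) ^ 2 + 2 • (G.adjMatrix ℝ)) (u 0) (u 0) = 3
      simp only [Matrix.add_apply, Matrix.smul_apply, pow_two]
      rw [hdiagw]
      simp [SimpleGraph.adjMatrix_apply, SimpleGraph.irrefl, adjuu, adjuv, adjvu, adjvv0, adjuw0, adjuw1, adjvw0, adjvw1, adjw0u, adjw1u, hvw0, hvw1, hww, hww']
    · show ((G.adjMatrix ℝ) ^ 2 + 2 • (G.adjMatrix ℝ)) (u 0) (u 1) = 2
      simp only [Matrix.add_apply, Matrix.smul_apply, pow_two]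
      rw [hmul _ _ _ _ _ hN0]
      simp [SimpleGraph.adjMatrix_apply, SimpleGraph.irrefl, adjuu, adjuv, adjvu, adjvv0, adjuw0, adjuw1, adjvw0, adjvw1, adjw0u, adjw1u, hvw0, hvw1, hww, hww']
    · show ((G.adjMatrix ℝ) ^ 2 + 2 • (G.adjMatrix ℝ)) (u 0) (u 2) = 1
      simp only [Matrix.add_apply, Matrix.smul_apply, pow_two]
      rw [hmul _ _ _ _ _ hN0]
      simp [SimpleGraph.adjMatrix_apply, SimpleGraph.irrefl, adjuu, adjuv, adjvu, adjvv0, adjuw0, adjuw1, adjvw0, adjvw1, adjw0u, adjw1u, hvw0, hvw1, hww, hww']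
    · show ((G.adjMatrix ℝ) ^ 2 + 2 • (G.adjMatrix ℝ)) (u 0) (u 3) = 1
      simp only [Matrix.add_apply, Matrix.smul_apply, pow_two]
      rw [hmul _ _ _ _ _ hN0]
      simp [SimpleGraph.adjMatrix_apply, SimpleGraph.irrefl, adjuu, adjuv, adjvu, adjvv0, adjuw0, adjuw1, adjvw0, adjvw1, adjw0u, adjw1u, hvw0, hvw1, hww, hww']
    · show ((G.adjMatrix ℝ) ^ 2 + 2 • (G.adjMatrix ℝ)) (u 0) (u 4) = 2
      simp only [Matrix.add_apply, Matrix.smul_apply, pow_two]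
      rw [hmul _ _ _ _ _ hN0]
      simp [SimpleGraph.adjMatrix_apply, SimpleGraph.irrefl, adjuu, adjuv, adjvu, adjvv0, adjuw0, adjuw1, adjvw0, adjvw1, adjw0u, adjw1u, hvw0, hvw1, hww, hww']
    · show ((G.adjMatrix ℝ) ^ 2 + 2 • (G.adjMatrix ℝ)) (u 0) (v 0) = 2
      simp only [Matrix.add_apply, Matrix.smul_apply, pow_two]
      rw [hmul _ _ _ _ _ hN0]
      simp [SimpleGraph.adjMatrix_apply, SimpleGraph.irrefl, adjuu, adjuv, adjvu, adjvv0, adjuw0, adjuw1, adjvw0, adjvw1, adjw0u, adjw1u, hvw0, hvw1, hww, hww']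
    · show ((G.adjMatrix ℝ) ^ 2 + 2 • (G.adjMatrix ℝ)) (u 0) (w₀) = 1
      simp only [Matrix.add_apply, Matrix.smul_apply, pow_two]
      rw [hmul _ _ _ _ _ hN0]
      simp [SimpleGraph.adjMatrix_apply, SimpleGraph.irrefl, adjuu, adjuv, adjvu, adjvv0, adjuw0, adjuw1, adjvw0, adjvw1, adjw0u, adjw1u, hvw0, hvw1, hww, hww']
    · show ((G.adjMatrix ℝ) ^ 2 + 2 • (G.adjMatrix ℝ)) (u 0) (w₁) = 1
      simp only [Matrix.add_apply, Matrix.smul_apply, pow_two]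
      rw [hmul _ _ _ _ _ hN0]
      simp [SimpleGraph.adjMatrix_apply, SimpleGraph.irrefl, adjuu, adjuv, adjvu, adjvv0, adjuw0, adjuw1, adjvw0, adjvw1, adjw0u, adjw1u, hvw0, hvw1, hww, hww']
    · show ((G.adjMatrix ℝ) ^ 2 + 2 • (G.adjMatrix ℝ)) (u 1) (u 0) = 2
      simp only [Matrix.add_apply, Matrix.smul_apply, pow_two]
      rw [hmul _ _ _ _ _ hN1]
      simp [SimpleGraph.adjMatrix_apply, SimpleGraph.irrefl, adjuu, adjuv, adjvu, adjvv0, adjuw0, adjuw1, adjvw0, adjvw1, adjw0u, adjw1u, hvw0, hvw1, hww, hww']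
    · show ((G.adjMatrix ℝ) ^ 2 + 2 • (G.adjMatrix ℝ)) (u 1) (u 1) = 3
      simp only [Matrix.add_apply, Matrix.smul_apply, pow_two]
      rw [hdiagw]
      simp [SimpleGraph.adjMatrix_apply, SimpleGraph.irrefl, adjuu, adjuv, adjvu, adjvv0, adjuw0, adjuw1, adjvw0, adjvw1, adjw0u, adjw1u, hvw0, hvw1, hww, hww']
    · show ((G.adjMatrix ℝ) ^ 2 + 2 • (G.adjMatrix ℝ)) (u 1) (u 2) = 2
      simp only [Matrix.add_apply, Matrix.smul_apply, pow_two]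
      rw [hmul _ _ _ _ _ hN1]
      simp [SimpleGraph.adjMatrix_apply, SimpleGraph.irrefl, adjuu, adjuv, adjvu, adjvv0, adjuw0, adjuw1, adjvw0, adjvw1, adjw0u, adjw1u, hvw0, hvw1, hww, hww']
    · show ((G.adjMatrix ℝ) ^ 2 + 2 • (G.adjMatrix ℝ)) (u 1) (u 3) = 1
      simp only [Matrix.add_apply, Matrix.smul_apply, pow_two]
      rw [hmul _ _ _ _ _ hN1]
      simp [SimpleGraph.adjMatrix_apply, SimpleGraph.irrefl, adjuu, adjuv, adjvu, adjvv0, adjuw0, adjuw1, adjvw0, adjvw1, adjw0u, adjw1u, hvw0, hvw1, hww, hww']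
    · show ((G.adjMatrix ℝ) ^ 2 + 2 • (G.adjMatrix ℝ)) (u 1) (u 4) = 1
      simp only [Matrix.add_apply, Matrix.smul_apply, pow_two]
      rw [hmul _ _ _ _ _ hN1]
      simp [SimpleGraph.adjMatrix_apply, SimpleGraph.irrefl, adjuu, adjuv, adjvu, adjvv0, adjuw0, adjuw1, adjvw0, adjvw1, adjw0u, adjw1u, hvw0, hvw1, hww, hww']
    · show ((G.adjMatrix ℝ) ^ 2 + 2 • (G.adjMatrix ℝ)) (u 1) (v 0) = 1
      simp only [Matrix.add_apply, Matrix.smul_apply, pow_two]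
      rw [hmul _ _ _ _ _ hN1]
      simp [SimpleGraph.adjMatrix_apply, SimpleGraph.irrefl, adjuu, adjuv, adjvu, adjvv0, adjuw0, adjuw1, adjvw0, adjvw1, adjw0u, adjw1u, hvw0, hvw1, hww, hww']
    · show ((G.adjMatrix ℝ) ^ 2 + 2 • (G.adjMatrix ℝ)) (u 1) (w₀) = 0
      simp only [Matrix.add_apply, Matrix.smul_apply, pow_two]
      rw [hmul _ _ _ _ _ hN1]
      simp [SimpleGraph.adjMatrix_apply, SimpleGraph.irrefl, adjuu, adjuv, adjvu, adjvv0, adjuw0, adjuw1, adjvw0, adjvw1, adjw0u, adjw1u, hvw0, hvw1, hww, hww']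
    · show ((G.adjMatrix ℝ) ^ 2 + 2 • (G.adjMatrix ℝ)) (u 1) (w₁) = 0
      simp only [Matrix.add_apply, Matrix.smul_apply, pow_two]
      rw [hmul _ _ _ _ _ hN1]
      simp [SimpleGraph.adjMatrix_apply, SimpleGraph.irrefl, adjuu, adjuv, adjvu, adjvv0, adjuw0, adjuw1, adjvw0, adjvw1, adjw0u, adjw1u, hvw0, hvw1, hww, hww']
    · show ((G.adjMatrix ℝ) ^ 2 + 2 • (G.adjMatrix ℝ)) (u 2) (u 0) = 1
      simp only [Matrix.add_apply, Matrix.smul_apply, pow_two]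
      rw [hmul _ _ _ _ _ hN2]
      simp [SimpleGraph.adjMatrix_apply, SimpleGraph.irrefl, adjuu, adjuv, adjvu, adjvv0, adjuw0, adjuw1, adjvw0, adjvw1, adjw0u, adjw1u, hvw0, hvw1, hww, hww']
    · show ((G.adjMatrix ℝ) ^ 2 + 2 • (G.adjMatrix ℝ)) (u 2) (u 1) = 2
      simp only [Matrix.add_apply, Matrix.smul_apply, pow_two]
      rw [hmul _ _ _ _ _ hN2]
      simp [SimpleGraph.adjMatrix_apply, SimpleGraph.irrefl, adjuu, adjuv, adjvu, adjvv0, adjuw0, adjuw1, adjvw0, adjvw1, adjw0u, adjw1u, hvw0, hvw1, hww, hww']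
    · show ((G.adjMatrix ℝ) ^ 2 + 2 • (G.adjMatrix ℝ)) (u 2) (u 2) = 3
      simp only [Matrix.add_apply, Matrix.smul_apply, pow_two]
      rw [hdiagw]
      simp [SimpleGraph.adjMatrix_apply, SimpleGraph.irrefl, adjuu, adjuv, adjvu, adjvv0, adjuw0, adjuw1, adjvw0, adjvw1, adjw0u, adjw1u, hvw0, hvw1, hww, hww']
    · show ((G.adjMatrix ℝ) ^ 2 + 2 • (G.adjMatrix ℝ)) (u 2) (u 3) = 2
      simp only [Matrix.add_apply, Matrix.smul_apply, pow_two]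
      rw [hmul _ _ _ _ _ hN2]
      simp [SimpleGraph.adjMatrix_apply, SimpleGraph.irrefl, adjuu, adjuv, adjvu, adjvv0, adjuw0, adjuw1, adjvw0, adjvw1, adjw0u, adjw1u, hvw0, hvw1, hww, hww']
    · show ((G.adjMatrix ℝ) ^ 2 + 2 • (G.adjMatrix ℝ)) (u 2) (u 4) = 1
      simp only [Matrix.add_apply, Matrix.smul_apply, pow_two]
      rw [hmul _ _ _ _ _ hN2]
      simp [SimpleGraph.adjMatrix_apply, SimpleGraph.irrefl, adjuu, adjuv, adjvu, adjvv0, adjuw0, adjuw1, adjvw0, adjvw1, adjw0u, adjw1u, hvw0, hvw1, hww, hww']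
    · show ((G.adjMatrix ℝ) ^ 2 + 2 • (G.adjMatrix ℝ)) (u 2) (v 0) = 0
      simp only [Matrix.add_apply, Matrix.smul_apply, pow_two]
      rw [hmul _ _ _ _ _ hN2]
      simp [SimpleGraph.adjMatrix_apply, SimpleGraph.irrefl, adjuu, adjuv, adjvu, adjvv0, adjuw0, adjuw1, adjvw0, adjvw1, adjw0u, adjw1u, hvw0, hvw1, hww, hww']
    · show ((G.adjMatrix ℝ) ^ 2 + 2 • (G.adjMatrix ℝ)) (u 2) (w₀) = 0
      simp only [Matrix.add_apply, Matrix.smul_apply, pow_two]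
      rw [hmul _ _ _ _ _ hN2]
      simp [SimpleGraph.adjMatrix_apply, SimpleGraph.irrefl, adjuu, adjuv, adjvu, adjvv0, adjuw0, adjuw1, adjvw0, adjvw1, adjw0u, adjw1u, hvw0, hvw1, hww, hww']
    · show ((G.adjMatrix ℝ) ^ 2 + 2 • (G.adjMatrix ℝ)) (u 2) (w₁) = 0
      simp only [Matrix.add_apply, Matrix.smul_apply, pow_two]
      rw [hmul _ _ _ _ _ hN2]
      simp [SimpleGraph.adjMatrix_apply, SimpleGraph.irrefl, adjuu, adjuv, adjvu, adjvv0, adjuw0, adjuw1, adjvw0, adjvw1, adjw0u, adjw1u, hvw0, hvw1, hww, hww']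
    · show ((G.adjMatrix ℝ) ^ 2 + 2 • (G.adjMatrix ℝ)) (u 3) (u 0) = 1
      simp only [Matrix.add_apply, Matrix.smul_apply, pow_two]
      rw [hmul _ _ _ _ _ hN3]
      simp [SimpleGraph.adjMatrix_apply, SimpleGraph.irrefl, adjuu, adjuv, adjvu, adjvv0, adjuw0, adjuw1, adjvw0, adjvw1, adjw0u, adjw1u, hvw0, hvw1, hww, hww']
    · show ((G.adjMatrix ℝ) ^ 2 + 2 • (G.adjMatrix ℝ)) (u 3) (u 1) = 1
      simp only [Matrix.add_apply, Matrix.smul_apply, pow_two]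
      rw [hmul _ _ _ _ _ hN3]
      simp [SimpleGraph.adjMatrix_apply, SimpleGraph.irrefl, adjuu, adjuv, adjvu, adjvv0, adjuw0, adjuw1, adjvw0, adjvw1, adjw0u, adjw1u, hvw0, hvw1, hww, hww']
    · show ((G.adjMatrix ℝ) ^ 2 + 2 • (G.adjMatrix ℝ)) (u 3) (u 2) = 2
      simp only [Matrix.add_apply, Matrix.smul_apply, pow_two]
      rw [hmul _ _ _ _ _ hN3]
      simp [SimpleGraph.adjMatrix_apply, SimpleGraph.irrefl, adjuu, adjuv, adjvu, adjvv0, adjuw0, adjuw1, adjvw0, adjvw1, adjw0u, adjw1u, hvw0, hvw1, hww, hww']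
    · show ((G.adjMatrix ℝ) ^ 2 + 2 • (G.adjMatrix ℝ)) (u 3) (u 3) = 3
      simp only [Matrix.add_apply, Matrix.smul_apply, pow_two]
      rw [hdiagw]
      simp [SimpleGraph.adjMatrix_apply, SimpleGraph.irrefl, adjuu, adjuv, adjvu, adjvv0, adjuw0, adjuw1, adjvw0, adjvw1, adjw0u, adjw1u, hvw0, hvw1, hww, hww']
    · show ((G.adjMatrix ℝ) ^ 2 + 2 • (G.adjMatrix ℝ)) (u 3) (u 4) = 2
      simp only [Matrix.add_apply, Matrix.smul_apply, pow_two]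
      rw [hmul _ _ _ _ _ hN3]
      simp [SimpleGraph.adjMatrix_apply, SimpleGraph.irrefl, adjuu, adjuv, adjvu, adjvv0, adjuw0, adjuw1, adjvw0, adjvw1, adjw0u, adjw1u, hvw0, hvw1, hww, hww']
    · show ((G.adjMatrix ℝ) ^ 2 + 2 • (G.adjMatrix ℝ)) (u 3) (v 0) = 0
      simp only [Matrix.add_apply, Matrix.smul_apply, pow_two]
      rw [hmul _ _ _ _ _ hN3]
      simp [SimpleGraph.adjMatrix_apply, SimpleGraph.irrefl, adjuu, adjuv, adjvu, adjvv0, adjuw0, adjuw1, adjvw0, adjvw1, adjw0u, adjw1u, hvw0, hvw1, hww, hww']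
    · show ((G.adjMatrix ℝ) ^ 2 + 2 • (G.adjMatrix ℝ)) (u 3) (w₀) = 0
      simp only [Matrix.add_apply, Matrix.smul_apply, pow_two]
      rw [hmul _ _ _ _ _ hN3]
      simp [SimpleGraph.adjMatrix_apply, SimpleGraph.irrefl, adjuu, adjuv, adjvu, adjvv0, adjuw0, adjuw1, adjvw0, adjvw1, adjw0u, adjw1u, hvw0, hvw1, hww, hww']
    · show ((G.adjMatrix ℝ) ^ 2 + 2 • (G.adjMatrix ℝ)) (u 3) (w₁) = 0
      simp only [Matrix.add_apply, Matrix.smul_apply, pow_two]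
      rw [hmul _ _ _ _ _ hN3]
      simp [SimpleGraph.adjMatrix_apply, SimpleGraph.irrefl, adjuu, adjuv, adjvu, adjvv0, adjuw0, adjuw1, adjvw0, adjvw1, adjw0u, adjw1u, hvw0, hvw1, hww, hww']
    · show ((G.adjMatrix ℝ) ^ 2 + 2 • (G.adjMatrix ℝ)) (u 4) (u 0) = 2
      simp only [Matrix.add_apply, Matrix.smul_apply, pow_two]
      rw [hmul _ _ _ _ _ hN4]
      simp [SimpleGraph.adjMatrix_apply, SimpleGraph.irrefl, adjuu, adjuv, adjvu, adjvv0, adjuw0, adjuw1, adjvw0, adjvw1, adjw0u, adjw1u, hvw0, hvw1, hww, hww']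
    · show ((G.adjMatrix ℝ) ^ 2 + 2 • (G.adjMatrix ℝ)) (u 4) (u 1) = 1
      simp only [Matrix.add_apply, Matrix.smul_apply, pow_two]
      rw [hmul _ _ _ _ _ hN4]
      simp [SimpleGraph.adjMatrix_apply, SimpleGraph.irrefl, adjuu, adjuv, adjvu, adjvv0, adjuw0, adjuw1, adjvw0, adjvw1, adjw0u, adjw1u, hvw0, hvw1, hww, hww']
    · show ((G.adjMatrix ℝ) ^ 2 + 2 • (G.adjMatrix ℝ)) (u 4) (u 2) = 1
      simp only [Matrix.add_apply, Matrix.smul_apply, pow_two]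
      rw [hmul _ _ _ _ _ hN4]
      simp [SimpleGraph.adjMatrix_apply, SimpleGraph.irrefl, adjuu, adjuv, adjvu, adjvv0, adjuw0, adjuw1, adjvw0, adjvw1, adjw0u, adjw1u, hvw0, hvw1, hww, hww']
    · show ((G.adjMatrix ℝ) ^ 2 + 2 • (G.adjMatrix ℝ)) (u 4) (u 3) = 2
      simp only [Matrix.add_apply, Matrix.smul_apply, pow_two]
      rw [hmul _ _ _ _ _ hN4]
      simp [SimpleGraph.adjMatrix_apply, SimpleGraph.irrefl, adjuu, adjuv, adjvu, adjvv0, adjuw0, adjuw1, adjvw0, adjvw1, adjw0u, adjw1u, hvw0, hvw1, hww, hww']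
    · show ((G.adjMatrix ℝ) ^ 2 + 2 • (G.adjMatrix ℝ)) (u 4) (u 4) = 3
      simp only [Matrix.add_apply, Matrix.smul_apply, pow_two]
      rw [hdiagw]
      simp [SimpleGraph.adjMatrix_apply, SimpleGraph.irrefl, adjuu, adjuv, adjvu, adjvv0, adjuw0, adjuw1, adjvw0, adjvw1, adjw0u, adjw1u, hvw0, hvw1, hww, hww']
    · show ((G.adjMatrix ℝ) ^ 2 + 2 • (G.adjMatrix ℝ)) (u 4) (v 0) = 1
      simp only [Matrix.add_apply, Matrix.smul_apply, pow_two]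
      rw [hmul _ _ _ _ _ hN4]
      simp [SimpleGraph.adjMatrix_apply, SimpleGraph.irrefl, adjuu, adjuv, adjvu, adjvv0, adjuw0, adjuw1, adjvw0, adjvw1, adjw0u, adjw1u, hvw0, hvw1, hww, hww']
    · show ((G.adjMatrix ℝ) ^ 2 + 2 • (G.adjMatrix ℝ)) (u 4) (w₀) = 0
      simp only [Matrix.add_apply, Matrix.smul_apply, pow_two]
      rw [hmul _ _ _ _ _ hN4]
      simp [SimpleGraph.adjMatrix_apply, SimpleGraph.irrefl, adjuu, adjuv, adjvu, adjvv0, adjuw0, adjuw1, adjvw0, adjvw1, adjw0u, adjw1u, hvw0, hvw1, hww, hww']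
    · show ((G.adjMatrix ℝ) ^ 2 + 2 • (G.adjMatrix ℝ)) (u 4) (w₁) = 0
      simp only [Matrix.add_apply, Matrix.smul_apply, pow_two]
      rw [hmul _ _ _ _ _ hN4]
      simp [SimpleGraph.adjMatrix_apply, SimpleGraph.irrefl, adjuu, adjuv, adjvu, adjvv0, adjuw0, adjuw1, adjvw0, adjvw1, adjw0u, adjw1u, hvw0, hvw1, hww, hww']
    · show ((G.adjMatrix ℝ) ^ 2 + 2 • (G.adjMatrix ℝ)) (v 0) (u 0) = 2
      simp only [Matrix.add_apply, Matrix.smul_apply, pow_two]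
      rw [hmul _ _ _ _ _ hNv0]
      simp [SimpleGraph.adjMatrix_apply, SimpleGraph.irrefl, adjuu, adjuv, adjvu, adjvv0, adjuw0, adjuw1, adjvw0, adjvw1, adjw0u, adjw1u, hvw0, hvw1, hww, hww']
    · show ((G.adjMatrix ℝ) ^ 2 + 2 • (G.adjMatrix ℝ)) (v 0) (u 1) = 1
      simp only [Matrix.add_apply, Matrix.smul_apply, pow_two]
      rw [hmul _ _ _ _ _ hNv0]
      simp [SimpleGraph.adjMatrix_apply, SimpleGraph.irrefl, adjuu, adjuv, adjvu, adjvv0, adjuw0, adjuw1, adjvw0, adjvw1, adjw0u, adjw1u, hvw0, hvw1, hww, hww']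
    · show ((G.adjMatrix ℝ) ^ 2 + 2 • (G.adjMatrix ℝ)) (v 0) (u 2) = 0
      simp only [Matrix.add_apply, Matrix.smul_apply, pow_two]
      rw [hmul _ _ _ _ _ hNv0]
      simp [SimpleGraph.adjMatrix_apply, SimpleGraph.irrefl, adjuu, adjuv, adjvu, adjvv0, adjuw0, adjuw1, adjvw0, adjvw1, adjw0u, adjw1u, hvw0, hvw1, hww, hww']
    · show ((G.adjMatrix ℝ) ^ 2 + 2 • (G.adjMatrix ℝ)) (v 0) (u 3) = 0
      simp only [Matrix.add_apply, Matrix.smul_apply, pow_two]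
      rw [hmul _ _ _ _ _ hNv0]
      simp [SimpleGraph.adjMatrix_apply, SimpleGraph.irrefl, adjuu, adjuv, adjvu, adjvv0, adjuw0, adjuw1, adjvw0, adjvw1, adjw0u, adjw1u, hvw0, hvw1, hww, hww']
    · show ((G.adjMatrix ℝ) ^ 2 + 2 • (G.adjMatrix ℝ)) (v 0) (u 4) = 1
      simp only [Matrix.add_apply, Matrix.smul_apply, pow_two]
      rw [hmul _ _ _ _ _ hNv0]
      simp [SimpleGraph.adjMatrix_apply, SimpleGraph.irrefl, adjuu, adjuv, adjvu, adjvv0, adjuw0, adjuw1, adjvw0, adjvw1, adjw0u, adjw1u, hvw0, hvw1, hww, hww']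
    · show ((G.adjMatrix ℝ) ^ 2 + 2 • (G.adjMatrix ℝ)) (v 0) (v 0) = 3
      simp only [Matrix.add_apply, Matrix.smul_apply, pow_two]
      rw [hdiagw]
      simp [SimpleGraph.adjMatrix_apply, SimpleGraph.irrefl, adjuu, adjuv, adjvu, adjvv0, adjuw0, adjuw1, adjvw0, adjvw1, adjw0u, adjw1u, hvw0, hvw1, hww, hww']
    · show ((G.adjMatrix ℝ) ^ 2 + 2 • (G.adjMatrix ℝ)) (v 0) (w₀) = 2
      simp only [Matrix.add_apply, Matrix.smul_apply, pow_two]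
      rw [hmul _ _ _ _ _ hNv0]
      simp [SimpleGraph.adjMatrix_apply, SimpleGraph.irrefl, adjuu, adjuv, adjvu, adjvv0, adjuw0, adjuw1, adjvw0, adjvw1, adjw0u, adjw1u, hvw0, hvw1, hww, hww']
    · show ((G.adjMatrix ℝ) ^ 2 + 2 • (G.adjMatrix ℝ)) (v 0) (w₁) = 2
      simp only [Matrix.add_apply, Matrix.smul_apply, pow_two]
      rw [hmul _ _ _ _ _ hNv0]
      simp [SimpleGraph.adjMatrix_apply, SimpleGraph.irrefl, adjuu, adjuv, adjvu, adjvv0, adjuw0, adjuw1, adjvw0, adjvw1, adjw0u, adjw1u, hvw0, hvw1, hww, hww']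
    · show ((G.adjMatrix ℝ) ^ 2 + 2 • (G.adjMatrix ℝ)) (w₀) (u 0) = 1
      simp only [Matrix.add_apply, Matrix.smul_apply, pow_two]
      rw [hsymAA, hmul _ _ _ _ _ hN0]
      simp [SimpleGraph.adjMatrix_apply, SimpleGraph.irrefl, adjuu, adjuv, adjvu, adjvv0, adjuw0, adjuw1, adjvw0, adjvw1, adjw0u, adjw1u, hvw0, hvw1, hww, hww']
    · show ((G.adjMatrix ℝ) ^ 2 + 2 • (G.adjMatrix ℝ)) (w₀) (u 1) = 0
      simp only [Matrix.add_apply, Matrix.smul_apply, pow_two]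
      rw [hsymAA, hmul _ _ _ _ _ hN1]
      simp [SimpleGraph.adjMatrix_apply, SimpleGraph.irrefl, adjuu, adjuv, adjvu, adjvv0, adjuw0, adjuw1, adjvw0, adjvw1, adjw0u, adjw1u, hvw0, hvw1, hww, hww']
    · show ((G.adjMatrix ℝ) ^ 2 + 2 • (G.adjMatrix ℝ)) (w₀) (u 2) = 0
      simp only [Matrix.add_apply, Matrix.smul_apply, pow_two]
      rw [hsymAA, hmul _ _ _ _ _ hN2]
      simp [SimpleGraph.adjMatrix_apply, SimpleGraph.irrefl, adjuu, adjuv, adjvu, adjvv0, adjuw0, adjuw1, adjvw0, adjvw1, adjw0u, adjw1u, hvw0, hvw1, hww, hww']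
    · show ((G.adjMatrix ℝ) ^ 2 + 2 • (G.adjMatrix ℝ)) (w₀) (u 3) = 0
      simp only [Matrix.add_apply, Matrix.smul_apply, pow_two]
      rw [hsymAA, hmul _ _ _ _ _ hN3]
      simp [SimpleGraph.adjMatrix_apply, SimpleGraph.irrefl, adjuu, adjuv, adjvu, adjvv0, adjuw0, adjuw1, adjvw0, adjvw1, adjw0u, adjw1u, hvw0, hvw1, hww, hww']
    · show ((G.adjMatrix ℝ) ^ 2 + 2 • (G.adjMatrix ℝ)) (w₀) (u 4) = 0
      simp only [Matrix.add_apply, Matrix.smul_apply, pow_two]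
      rw [hsymAA, hmul _ _ _ _ _ hN4]
      simp [SimpleGraph.adjMatrix_apply, SimpleGraph.irrefl, adjuu, adjuv, adjvu, adjvv0, adjuw0, adjuw1, adjvw0, adjvw1, adjw0u, adjw1u, hvw0, hvw1, hww, hww']
    · show ((G.adjMatrix ℝ) ^ 2 + 2 • (G.adjMatrix ℝ)) (w₀) (v 0) = 2
      simp only [Matrix.add_apply, Matrix.smul_apply, pow_two]
      rw [hsymAA, hmul _ _ _ _ _ hNv0]
      simp [SimpleGraph.adjMatrix_apply, SimpleGraph.irrefl, adjuu, adjuv, adjvu, adjvv0, adjuw0, adjuw1, adjvw0, adjvw1, adjw0u, adjw1u, hvw0, hvw1, hww, hww']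
    · show ((G.adjMatrix ℝ) ^ 2 + 2 • (G.adjMatrix ℝ)) (w₀) (w₀) = 3
      simp only [Matrix.add_apply, Matrix.smul_apply, pow_two]
      rw [hdiagw]
      simp [SimpleGraph.adjMatrix_apply, SimpleGraph.irrefl, adjuu, adjuv, adjvu, adjvv0, adjuw0, adjuw1, adjvw0, adjvw1, adjw0u, adjw1u, hvw0, hvw1, hww, hww']
    · show ((G.adjMatrix ℝ) ^ 2 + 2 • (G.adjMatrix ℝ)) (w₀) (w₁) = 1
      simp only [Matrix.add_apply, Matrix.smul_apply, pow_two]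
      rw [hcross]
      simp [SimpleGraph.adjMatrix_apply, SimpleGraph.irrefl, adjuu, adjuv, adjvu, adjvv0, adjuw0, adjuw1, adjvw0, adjvw1, adjw0u, adjw1u, hvw0, hvw1, hww, hww']
    · show ((G.adjMatrix ℝ) ^ 2 + 2 • (G.adjMatrix ℝ)) (w₁) (u 0) = 1
      simp only [Matrix.add_apply, Matrix.smul_apply, pow_two]
      rw [hsymAA, hmul _ _ _ _ _ hN0]
      simp [SimpleGraph.adjMatrix_apply, SimpleGraph.irrefl, adjuu, adjuv, adjvu, adjvv0, adjuw0, adjuw1, adjvw0, adjvw1, adjw0u, adjw1u, hvw0, hvw1, hww, hww']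
    · show ((G.adjMatrix ℝ) ^ 2 + 2 • (G.adjMatrix ℝ)) (w₁) (u 1) = 0
      simp only [Matrix.add_apply, Matrix.smul_apply, pow_two]
      rw [hsymAA, hmul _ _ _ _ _ hN1]
      simp [SimpleGraph.adjMatrix_apply, SimpleGraph.irrefl, adjuu, adjuv, adjvu, adjvv0, adjuw0, adjuw1, adjvw0, adjvw1, adjw0u, adjw1u, hvw0, hvw1, hww, hww']
    · show ((G.adjMatrix ℝ) ^ 2 + 2 • (G.adjMatrix ℝ)) (w₁) (u 2) = 0
      simp only [Matrix.add_apply, Matrix.smul_apply, pow_two]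
      rw [hsymAA, hmul _ _ _ _ _ hN2]
      simp [SimpleGraph.adjMatrix_apply, SimpleGraph.irrefl, adjuu, adjuv, adjvu, adjvv0, adjuw0, adjuw1, adjvw0, adjvw1, adjw0u, adjw1u, hvw0, hvw1, hww, hww']
    · show ((G.adjMatrix ℝ) ^ 2 + 2 • (G.adjMatrix ℝ)) (w₁) (u 3) = 0
      simp only [Matrix.add_apply, Matrix.smul_apply, pow_two]
      rw [hsymAA, hmul _ _ _ _ _ hN3]
      simp [SimpleGraph.adjMatrix_apply, SimpleGraph.irrefl, adjuu, adjuv, adjvu, adjvv0, adjuw0, adjuw1, adjvw0, adjvw1, adjw0u, adjw1u, hvw0, hvw1, hww, hww']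
    · show ((G.adjMatrix ℝ) ^ 2 + 2 • (G.adjMatrix ℝ)) (w₁) (u 4) = 0
      simp only [Matrix.add_apply, Matrix.smul_apply, pow_two]
      rw [hsymAA, hmul _ _ _ _ _ hN4]
      simp [SimpleGraph.adjMatrix_apply, SimpleGraph.irrefl, adjuu, adjuv, adjvu, adjvv0, adjuw0, adjuw1, adjvw0, adjvw1, adjw0u, adjw1u, hvw0, hvw1, hww, hww']
    · show ((G.adjMatrix ℝ) ^ 2 + 2 • (G.adjMatrix ℝ)) (w₁) (v 0) = 2
      simp only [Matrix.add_apply, Matrix.smul_apply, pow_two]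
      rw [hsymAA, hmul _ _ _ _ _ hNv0]
      simp [SimpleGraph.adjMatrix_apply, SimpleGraph.irrefl, adjuu, adjuv, adjvu, adjvv0, adjuw0, adjuw1, adjvw0, adjvw1, adjw0u, adjw1u, hvw0, hvw1, hww, hww']
    · show ((G.adjMatrix ℝ) ^ 2 + 2 • (G.adjMatrix ℝ)) (w₁) (w₀) = 1
      simp only [Matrix.add_apply, Matrix.smul_apply, pow_two]
      rw [hsymAA, hcross]
      simp [SimpleGraph.adjMatrix_apply, SimpleGraph.irrefl, adjuu, adjuv, adjvu, adjvv0, adjuw0, adjuw1, adjvw0, adjvw1, adjw0u, adjw1u, hvw0, hvw1, hww, hww']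
    · show ((G.adjMatrix ℝ) ^ 2 + 2 • (G.adjMatrix ℝ)) (w₁) (w₁) = 3
      simp only [Matrix.add_apply, Matrix.smul_apply, pow_two]
      rw [hdiagw]
      simp [SimpleGraph.adjMatrix_apply, SimpleGraph.irrefl, adjuu, adjuv, adjvu, adjvv0, adjuw0, adjuw1, adjvw0, adjvw1, adjw0u, adjw1u, hvw0, hvw1, hww, hww']
  -- positive semidefiniteness
  have hA : (G.adjMatrix ℝ).IsHermitian := by
    ext i j
    simp [Matrix.conjTranspose_apply, SimpleGraph.adjMatrix_apply, G.adj_comm]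
  obtain ⟨U, hU1, hU2, hsp⟩ : ∃ U : Matrix V V ℝ, star U * U = 1 ∧ U * star U = 1 ∧
      G.adjMatrix ℝ = U * Matrix.diagonal hA.eigenvalues * star U :=
    ⟨(Matrix.IsHermitian.eigenvectorUnitary hA : Matrix V V ℝ),
      (Matrix.mem_unitaryGroup_iff').mp (Matrix.IsHermitian.eigenvectorUnitary hA).2,
      (Matrix.mem_unitaryGroup_iff).mp (Matrix.IsHermitian.eigenvectorUnitary hA).2,
      by simpa [RCLike.ofReal_real_eq_id] using hA.spectral_theorem⟩
  have hdnn : 0 ≤ (fun i => (hA.eigenvalues i)^2 + 2 * hA.eigenvalues i) := by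
    intro i
    have hmem := hA.eigenvalues_mem_spectrum_real i
    have hnot : hA.eigenvalues i ∉ Set.Ioo (-2:ℝ) 0 := fun hin => hspec _ hin hmem
    simp only [Set.mem_Ioo, not_and, not_lt] at hnot
    simp only [Pi.zero_apply]
    rcases le_or_gt (hA.eigenvalues i) (-2) with h | h
    · nlinarith
    · nlinarith [hnot h]
  have hPSD : ((G.adjMatrix ℝ) ^ 2 + 2 • (G.adjMatrix ℝ)).PosSemidef := by
    have key : (G.adjMatrix ℝ) ^ 2 + 2 • (G.adjMatrix ℝ) =
        U * Matrix.diagonal (fun i => (hA.eigenvalues i)^2 + 2 * hA.eigenvalues i) * star U := by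
      have hdiag : Matrix.diagonal (fun i => (hA.eigenvalues i)^2 + 2 * hA.eigenvalues i) =
          Matrix.diagonal hA.eigenvalues * Matrix.diagonal hA.eigenvalues
          + 2 • Matrix.diagonal hA.eigenvalues := by
        rw [Matrix.diagonal_mul_diagonal]
        ext i j
        by_cases h : i = j <;> simp [h, Matrix.diagonal_apply, two_mul, sq]
      rw [pow_two, hdiag]
      conv_lhs => rw [hsp]
      simp only [Matrix.mul_add, Matrix.add_mul, Matrix.mul_smul, Matrix.smul_mul,
        Matrix.mul_assoc]
      rw [← Matrix.mul_assoc (star U) U, hU1, Matrix.one_mul]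
    rw [key]
    exact (Matrix.PosSemidef.diagonal hdnn).mul_mul_conjTranspose_same U
  have hsub := hPSD.submatrix ![u 0, u 1, u 2, u 3, u 4, v 0, w₀, w₁]
  rw [hE] at hsub
  have hq := hsub.dotProduct_mulVec_nonneg ![-6, 8, -4, -4, 8, -9, 6, 6]
  have hFalse : False := by
    norm_num [dotProduct, Matrix.mulVec, Fin.sum_univ_succ, Matrix.cons_val_zero,
      Matrix.cons_val_one, Matrix.head_cons, Matrix.cons_val_succ, Pi.star_apply,
      Matrix.cons_val', Matrix.empty_val', Matrix.cons_val_fin_one, Matrix.of_apply] at hq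
  exact ⟨hFalse.elim, hFalse⟩
end

section
/- The Petersen graph is the unique cubic graph on 10 vertices with girth 5 (up to isomorphism). -/
/-- The Petersen graph as the Kneser graph $K(5,2)$. -/
def petersen : SimpleGraph {s : Finset (Fin 5) // s.card = 2} where
  Adj a b := Disjoint (a : Finset (Fin 5)) (b : Finset (Fin 5))
  symm := ⟨fun _ _ h => h.symm⟩
  loopless := ⟨fun a h => by
    simp only [disjoint_self] at h
    have := a.2
    simp [h] at this⟩

instance : DecidableRel petersen.Adj :=
  fun a b => inferInstanceAs (Decidable (Disjoint (a : Finset (Fin 5)) b))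

section GirthTools

open SimpleGraph Walk

variable {V : Type*} {G : SimpleGraph V}

lemma my_egirth_le {a : V} (w : G.Walk a a) (hw : w.IsCycle) :
    G.egirth ≤ w.length := by
  unfold SimpleGraph.egirth
  exact le_trans (iInf_le _ a) (le_trans (iInf_le _ w) (iInf_le _ hw))

lemma cycle3 {a b c : V} (hab : G.Adj a b) (hbc : G.Adj b c) (hca : G.Adj c a) :
    ∃ w : G.Walk a a, w.IsCycle ∧ w.length = 3 := by
  refine ⟨cons hab (cons hbc (cons hca nil)), ?_, rfl⟩
  simp [Walk.cons_isCycle_iff, Walk.isPath_def, hab.ne, hbc.ne, hca.ne, hab.ne',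
    hbc.ne', hca.ne', (G.ne_of_adj hca).symm]

lemma cycle4 {a b c d : V} (hab : G.Adj a b) (hbc : G.Adj b c) (hcd : G.Adj c d)
    (hda : G.Adj d a) (hac : a ≠ c) (hbd : b ≠ d) :
    ∃ w : G.Walk a a, w.IsCycle ∧ w.length = 4 := by
  refine ⟨cons hab (cons hbc (cons hcd (cons hda nil))), ?_, rfl⟩
  simp [Walk.cons_isCycle_iff, Walk.isPath_def, hab.ne, hbc.ne, hcd.ne, hda.ne,
    hab.ne', hbc.ne', hcd.ne', hda.ne', hac, hbd, hac.symm, hbd.symm]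

lemma cycle5 {a b c d e : V} (hab : G.Adj a b) (hbc : G.Adj b c) (hcd : G.Adj c d)
    (hde : G.Adj d e) (hea : G.Adj e a) (hac : a ≠ c) (had : a ≠ d) (hbd : b ≠ d)
    (hbe : b ≠ e) (hce : c ≠ e) :
    ∃ w : G.Walk a a, w.IsCycle ∧ w.length = 5 := by
  refine ⟨cons hab (cons hbc (cons hcd (cons hde (cons hea nil)))), ?_, rfl⟩
  simp [Walk.cons_isCycle_iff, Walk.isPath_def, hab.ne, hbc.ne, hcd.ne, hde.ne, hea.ne,
    hab.ne', hbc.ne', hcd.ne', hde.ne', hea.ne', hac, had, hbd, hbe, hce,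
    hac.symm, had.symm, hbd.symm, hbe.symm, hce.symm]

lemma tri_of_len3 {a : V} {w : G.Walk a a} (h3 : w.length = 3) :
    ∃ x y z, G.Adj x y ∧ G.Adj y z ∧ G.Adj z x := by
  cases w with
  | nil => simp at h3
  | cons hab p =>
    cases p with
    | nil => simp at h3
    | cons hbc q =>
      cases q with
      | nil => simp at h3
      | cons hcd r =>
        cases r with
        | nil => exact ⟨_, _, _, hab, hbc, hcd⟩
        | cons h s => simp at h3

lemma quad_of_len4 {a : V} {w : G.Walk a a} (hc : w.IsCycle) (h4 : w.length = 4) :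
    ∃ x y z t, G.Adj x y ∧ G.Adj y z ∧ G.Adj z t ∧ G.Adj t x ∧ x ≠ z ∧ y ≠ t := by
  cases w with
  | nil => simp at h4
  | cons hab p =>
    cases p with
    | nil => simp at h4
    | cons hbc q =>
      cases q with
      | nil => simp at h4
      | cons hcd r =>
        cases r with
        | nil => simp at h4
        | cons hde s =>
          cases s with
          | nil =>
            have hnd := hc.2
            simp [Walk.support_cons] at hnd
            exact ⟨_, _, _, _, hab, hbc, hcd, hde, by tauto, by tauto⟩
          | cons h t => simp at h4

end GirthTools

section Build

abbrev PV := {s : Finset (Fin 5) // s.card = 2}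

def v01 : PV := ⟨{0,1}, rfl⟩
def v02 : PV := ⟨{0,2}, rfl⟩
def v03 : PV := ⟨{0,3}, rfl⟩
def v04 : PV := ⟨{0,4}, rfl⟩
def v12 : PV := ⟨{1,2}, rfl⟩
def v13 : PV := ⟨{1,3}, rfl⟩
def v14 : PV := ⟨{1,4}, rfl⟩
def v23 : PV := ⟨{2,3}, rfl⟩
def v24 : PV := ⟨{2,4}, rfl⟩
def v34 : PV := ⟨{3,4}, rfl⟩

lemma decade : ∀ s : PV, s = v01 ∨ s = v02 ∨ s = v03 ∨ s = v04 ∨ s = v12 ∨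
    s = v13 ∨ s = v14 ∨ s = v23 ∨ s = v24 ∨ s = v34 := by decide

def pmap {V : Type} (u n1 n2 n3 a1 a2 b1 b2 c1 c2 : V) : PV → V := fun s =>
  if (0 : Fin 5) ∈ s.1 then
    (if (1:Fin 5) ∈ s.1 then u else if (2:Fin 5) ∈ s.1 then c2 else
      if (3:Fin 5) ∈ s.1 then b2 else a1)
  else if (1:Fin 5) ∈ s.1 then
    (if (2:Fin 5) ∈ s.1 then c1 else if (3:Fin 5) ∈ s.1 then b1 else a2)
  else if (2:Fin 5) ∈ s.1 then
    (if (3:Fin 5) ∈ s.1 then n1 else n2)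
  else n3

lemma iso_of_inj_hom {V W : Type} [Fintype V] [Fintype W] [DecidableEq W]
    {G : SimpleGraph V} {H : SimpleGraph W} [DecidableRel G.Adj] [DecidableRel H.Adj]
    (hcard : Fintype.card V = Fintype.card W) {k : ℕ}
    (hG : G.IsRegularOfDegree k) (hH : H.IsRegularOfDegree k)
    (f : V → W) (hinj : Function.Injective f)
    (hhom : ∀ a b, G.Adj a b → H.Adj (f a) (f b)) : Nonempty (G ≃g H) := by
  have hbij : Function.Bijective f :=
    (Fintype.bijective_iff_injective_and_card f).mpr ⟨hinj, hcard⟩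
  have key : ∀ a, (G.neighborFinset a).image f = H.neighborFinset (f a) := by
    intro a
    apply Finset.eq_of_subset_of_card_le
    · intro w hw
      simp only [Finset.mem_image, SimpleGraph.mem_neighborFinset] at hw ⊢
      obtain ⟨x, hx, rfl⟩ := hw
      exact hhom _ _ hx
    · rw [Finset.card_image_of_injective _ hinj]
      exact le_of_eq ((hH (f a)).trans (hG a).symm)
  refine ⟨⟨Equiv.ofBijective f hbij, ?_⟩⟩
  intro a b
  constructor
  · intro h
    have : f b ∈ H.neighborFinset (f a) := by
      simpa [SimpleGraph.mem_neighborFinset] using h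
    rw [← key a] at this
    simp only [Finset.mem_image, SimpleGraph.mem_neighborFinset] at this
    obtain ⟨x, hx, hfx⟩ := this
    rwa [← hinj hfx]
  · exact fun h => hhom a b h

set_option maxHeartbeats 1000000 in
lemma build {V : Type} [Fintype V] [DecidableEq V] (G : SimpleGraph V) [DecidableRel G.Adj]
    (hcard : Fintype.card V = 10) (hreg : G.IsRegularOfDegree 3)
    (u n1 n2 n3 a1 a2 b1 b2 c1 c2 : V)
    (d1 : u ≠ n1) (d2 : u ≠ n2) (d3 : u ≠ n3) (d4 : u ≠ a1) (d5 : u ≠ a2)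
    (d6 : u ≠ b1) (d7 : u ≠ b2) (d8 : u ≠ c1) (d9 : u ≠ c2)
    (d10 : n1 ≠ n2) (d11 : n1 ≠ n3) (d12 : n1 ≠ a1) (d13 : n1 ≠ a2)
    (d14 : n1 ≠ b1) (d15 : n1 ≠ b2) (d16 : n1 ≠ c1) (d17 : n1 ≠ c2)
    (d18 : n2 ≠ n3) (d19 : n2 ≠ a1) (d20 : n2 ≠ a2) (d21 : n2 ≠ b1)
    (d22 : n2 ≠ b2) (d23 : n2 ≠ c1) (d24 : n2 ≠ c2)
    (d25 : n3 ≠ a1) (d26 : n3 ≠ a2) (d27 : n3 ≠ b1) (d28 : n3 ≠ b2)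
    (d29 : n3 ≠ c1) (d30 : n3 ≠ c2)
    (d31 : a1 ≠ a2) (d32 : a1 ≠ b1) (d33 : a1 ≠ b2) (d34 : a1 ≠ c1) (d35 : a1 ≠ c2)
    (d36 : a2 ≠ b1) (d37 : a2 ≠ b2) (d38 : a2 ≠ c1) (d39 : a2 ≠ c2)
    (d40 : b1 ≠ b2) (d41 : b1 ≠ c1) (d42 : b1 ≠ c2)
    (d43 : b2 ≠ c1) (d44 : b2 ≠ c2) (d45 : c1 ≠ c2)
    (e1 : G.Adj u n1) (e2 : G.Adj u n2) (e3 : G.Adj u n3)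
    (e4 : G.Adj n1 a1) (e5 : G.Adj n1 a2) (e6 : G.Adj n2 b1) (e7 : G.Adj n2 b2)
    (e8 : G.Adj n3 c1) (e9 : G.Adj n3 c2)
    (e10 : G.Adj a1 b1) (e11 : G.Adj a1 c1) (e12 : G.Adj a2 b2) (e13 : G.Adj a2 c2)
    (e14 : G.Adj b1 c2) (e15 : G.Adj b2 c1) :
    Nonempty (G ≃g petersen) := by
  have hwinj : Function.Injective (pmap u n1 n2 n3 a1 a2 b1 b2 c1 c2) := by
    intro s t h
    rcases decade s with rfl|rfl|rfl|rfl|rfl|rfl|rfl|rfl|rfl|rfl <;>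
      rcases decade t with rfl|rfl|rfl|rfl|rfl|rfl|rfl|rfl|rfl|rfl <;>
      simp_all [pmap, v01, v02, v03, v04, v12, v13, v14, v23, v24, v34]
  have hwhom : ∀ s t, petersen.Adj s t →
      G.Adj (pmap u n1 n2 n3 a1 a2 b1 b2 c1 c2 s) (pmap u n1 n2 n3 a1 a2 b1 b2 c1 c2 t) := by
    have f1 := e1.symm; have f2 := e2.symm; have f3 := e3.symm
    have f4 := e4.symm; have f5 := e5.symm; have f6 := e6.symm
    have f7 := e7.symm; have f8 := e8.symm; have f9 := e9.symm
    have f10 := e10.symm; have f11 := e11.symm; have f12 := e12.symm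
    have f13 := e13.symm; have f14 := e14.symm; have f15 := e15.symm
    intro s t hadj
    rcases decade s with rfl|rfl|rfl|rfl|rfl|rfl|rfl|rfl|rfl|rfl <;>
      rcases decade t with rfl|rfl|rfl|rfl|rfl|rfl|rfl|rfl|rfl|rfl <;>
      simp only [pmap, v01, v02, v03, v04, v12, v13, v14, v23, v24, v34] <;>
      first
        | exact absurd hadj (by decide)
        | (norm_num; assumption)
  obtain ⟨iso⟩ := iso_of_inj_hom (G := petersen) (H := G)
      (by rw [hcard]; decide) (k := 3)
      (by intro v; revert v; show ∀ v, petersen.degree v = 3; decide) hreg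
      (pmap u n1 n2 n3 a1 a2 b1 b2 c1 c2) hwinj hwhom
  exact ⟨iso.symm⟩

end Build

section Forcing

variable {V : Type} [Fintype V] [DecidableEq V] {G : SimpleGraph V} [DecidableRel G.Adj]

lemma two_sub {x : V} (hdeg : (G.neighborFinset x).card = 3) {y z : V}
    (h : ∀ w, G.Adj x w → w = y ∨ w = z) : False := by
  have hsub : G.neighborFinset x ⊆ {y, z} := by
    intro w hw
    rcases h w ((SimpleGraph.mem_neighborFinset _ _ _).mp hw) with rfl|rfl <;> simp
  have h1 := Finset.card_le_card hsub
  have h2 : ({y, z} : Finset V).card ≤ 2 :=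
    le_trans (Finset.card_insert_le _ _) (by simp)
  omega

lemma force5 {x p q r s t : V} (hdeg : (G.neighborFinset x).card = 3)
    (hsub : ∀ w, G.Adj x w → w = p ∨ w = q ∨ w = r ∨ w = s ∨ w = t)
    (hqr : ¬(G.Adj x q ∧ G.Adj x r)) (hst : ¬(G.Adj x s ∧ G.Adj x t)) :
    (G.Adj x q ∨ G.Adj x r) ∧ (G.Adj x s ∨ G.Adj x t) := by
  constructor
  · by_contra h
    push_neg at h
    by_cases hs : G.Adj x s
    · exact two_sub hdeg (y := p) (z := s)
        (fun w hw => by rcases hsub w hw with rfl|rfl|rfl|rfl|rfl <;> tauto)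
    · exact two_sub hdeg (y := p) (z := t)
        (fun w hw => by rcases hsub w hw with rfl|rfl|rfl|rfl|rfl <;> tauto)
  · by_contra h
    push_neg at h
    by_cases hq : G.Adj x q
    · exact two_sub hdeg (y := p) (z := q)
        (fun w hw => by rcases hsub w hw with rfl|rfl|rfl|rfl|rfl <;> tauto)
    · exact two_sub hdeg (y := p) (z := r)
        (fun w hw => by rcases hsub w hw with rfl|rfl|rfl|rfl|rfl <;> tauto)

lemma force_pair {x p q s t : V} (hdeg : (G.neighborFinset x).card = 3)
    (hsub : ∀ w, G.Adj x w → w = p ∨ w = q ∨ w = s ∨ w = t)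
    (hst : ¬(G.Adj x s ∧ G.Adj x t)) : G.Adj x s ∨ G.Adj x t := by
  by_contra h
  push_neg at h
  exact two_sub hdeg (y := p) (z := q)
    (fun w hw => by rcases hsub w hw with rfl|rfl|rfl|rfl <;> tauto)

end Forcing
section Structure

variable {V : Type} [Fintype V] [DecidableEq V] (G : SimpleGraph V) [DecidableRel G.Adj]

set_option linter.unusedSectionVars false in
lemma dpack
    (ntri : ∀ x y z : V, G.Adj x y → G.Adj y z → G.Adj z x → False)
    (hcn : ∀ x y p q : V, x ≠ y → G.Adj p x → G.Adj p y → G.Adj q x → G.Adj q y → p = q)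
    (u n1 n2 n3 a1 a2 b1 b2 c1 c2 : V)
    (e1 : G.Adj u n1) (e2 : G.Adj u n2) (e3 : G.Adj u n3)
    (e4 : G.Adj n1 a1) (e5 : G.Adj n1 a2) (e6 : G.Adj n2 b1) (e7 : G.Adj n2 b2)
    (e8 : G.Adj n3 c1) (e9 : G.Adj n3 c2)
    (hn12 : n1 ≠ n2) (hn13 : n1 ≠ n3) (hn23 : n2 ≠ n3)
    (ha : a1 ≠ a2) (hb : b1 ≠ b2) (hc : c1 ≠ c2)
    (hau1 : a1 ≠ u) (hau2 : a2 ≠ u) (hbu1 : b1 ≠ u) (hbu2 : b2 ≠ u)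
    (hcu1 : c1 ≠ u) (hcu2 : c2 ≠ u) :
    (u ≠ n1) ∧ (u ≠ n2) ∧ (u ≠ n3) ∧ (u ≠ a1) ∧ (u ≠ a2) ∧
    (u ≠ b1) ∧ (u ≠ b2) ∧ (u ≠ c1) ∧ (u ≠ c2) ∧
    (n1 ≠ n2) ∧ (n1 ≠ n3) ∧ (n1 ≠ a1) ∧ (n1 ≠ a2) ∧
    (n1 ≠ b1) ∧ (n1 ≠ b2) ∧ (n1 ≠ c1) ∧ (n1 ≠ c2) ∧
    (n2 ≠ n3) ∧ (n2 ≠ a1) ∧ (n2 ≠ a2) ∧ (n2 ≠ b1) ∧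
    (n2 ≠ b2) ∧ (n2 ≠ c1) ∧ (n2 ≠ c2) ∧
    (n3 ≠ a1) ∧ (n3 ≠ a2) ∧ (n3 ≠ b1) ∧ (n3 ≠ b2) ∧
    (n3 ≠ c1) ∧ (n3 ≠ c2) ∧
    (a1 ≠ a2) ∧ (a1 ≠ b1) ∧ (a1 ≠ b2) ∧ (a1 ≠ c1) ∧ (a1 ≠ c2) ∧
    (a2 ≠ b1) ∧ (a2 ≠ b2) ∧ (a2 ≠ c1) ∧ (a2 ≠ c2) ∧
    (b1 ≠ b2) ∧ (b1 ≠ c1) ∧ (b1 ≠ c2) ∧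
    (b2 ≠ c1) ∧ (b2 ≠ c2) ∧ (c1 ≠ c2) := by
  refine ⟨e1.ne, e2.ne, e3.ne, hau1.symm, hau2.symm, hbu1.symm, hbu2.symm,
    hcu1.symm, hcu2.symm, hn12, hn13, e4.ne, e5.ne, ?_, ?_, ?_, ?_, hn23,
    ?_, ?_, e6.ne, e7.ne, ?_, ?_, ?_, ?_, ?_, ?_, e8.ne, e9.ne,
    ha, ?_, ?_, ?_, ?_, ?_, ?_, ?_, ?_, hb, ?_, ?_, ?_, ?_, hc⟩
  -- n1 ≠ b1
  · rintro rfl; exact ntri u n2 n1 e2 e6 e1.symm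
  -- n1 ≠ b2
  · rintro rfl; exact ntri u n2 n1 e2 e7 e1.symm
  -- n1 ≠ c1
  · rintro rfl; exact ntri u n3 n1 e3 e8 e1.symm
  -- n1 ≠ c2
  · rintro rfl; exact ntri u n3 n1 e3 e9 e1.symm
  -- n2 ≠ a1
  · rintro rfl; exact ntri u n1 n2 e1 e4 e2.symm
  -- n2 ≠ a2
  · rintro rfl; exact ntri u n1 n2 e1 e5 e2.symm
  -- n2 ≠ c1
  · rintro rfl; exact ntri u n3 n2 e3 e8 e2.symm
  -- n2 ≠ c2
  · rintro rfl; exact ntri u n3 n2 e3 e9 e2.symm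
  -- n3 ≠ a1
  · rintro rfl; exact ntri u n1 n3 e1 e4 e3.symm
  -- n3 ≠ a2
  · rintro rfl; exact ntri u n1 n3 e1 e5 e3.symm
  -- n3 ≠ b1
  · rintro rfl; exact ntri u n2 n3 e2 e6 e3.symm
  -- n3 ≠ b2
  · rintro rfl; exact ntri u n2 n3 e2 e7 e3.symm
  -- a1 ≠ b1
  · rintro rfl; exact hau1 (hcn n1 n2 u a1 hn12 e1 e2 e4.symm e6.symm).symm
  -- a1 ≠ b2
  · rintro rfl; exact hau1 (hcn n1 n2 u a1 hn12 e1 e2 e4.symm e7.symm).symm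
  -- a1 ≠ c1
  · rintro rfl; exact hau1 (hcn n1 n3 u a1 hn13 e1 e3 e4.symm e8.symm).symm
  -- a1 ≠ c2
  · rintro rfl; exact hau1 (hcn n1 n3 u a1 hn13 e1 e3 e4.symm e9.symm).symm
  -- a2 ≠ b1
  · rintro rfl; exact hau2 (hcn n1 n2 u a2 hn12 e1 e2 e5.symm e6.symm).symm
  -- a2 ≠ b2
  · rintro rfl; exact hau2 (hcn n1 n2 u a2 hn12 e1 e2 e5.symm e7.symm).symm
  -- a2 ≠ c1
  · rintro rfl; exact hau2 (hcn n1 n3 u a2 hn13 e1 e3 e5.symm e8.symm).symm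
  -- a2 ≠ c2
  · rintro rfl; exact hau2 (hcn n1 n3 u a2 hn13 e1 e3 e5.symm e9.symm).symm
  -- b1 ≠ c1
  · rintro rfl; exact hbu1 (hcn n2 n3 u b1 hn23 e2 e3 e6.symm e8.symm).symm
  -- b1 ≠ c2
  · rintro rfl; exact hbu1 (hcn n2 n3 u b1 hn23 e2 e3 e6.symm e9.symm).symm
  -- b2 ≠ c1
  · rintro rfl; exact hbu2 (hcn n2 n3 u b2 hn23 e2 e3 e7.symm e8.symm).symm
  -- b2 ≠ c2
  · rintro rfl; exact hbu2 (hcn n2 n3 u b2 hn23 e2 e3 e7.symm e9.symm).symm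

end Structure
section Hall

variable {V : Type} [Fintype V] [DecidableEq V] (G : SimpleGraph V) [DecidableRel G.Adj]

set_option linter.unusedSectionVars false in
lemma hallpack (hcard : Fintype.card V = 10)
    (ntri : ∀ x y z : V, G.Adj x y → G.Adj y z → G.Adj z x → False)
    (hcn : ∀ x y p q : V, x ≠ y → G.Adj p x → G.Adj p y → G.Adj q x → G.Adj q y → p = q)
    (u n1 n2 n3 a1 a2 b1 b2 c1 c2 : V)
    (e1 : G.Adj u n1) (e2 : G.Adj u n2) (e3 : G.Adj u n3)
    (e4 : G.Adj n1 a1) (e5 : G.Adj n1 a2) (e6 : G.Adj n2 b1) (e7 : G.Adj n2 b2)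
    (e8 : G.Adj n3 c1) (e9 : G.Adj n3 c2)
    (hn12 : n1 ≠ n2) (hn13 : n1 ≠ n3) (hn23 : n2 ≠ n3)
    (ha : a1 ≠ a2) (hb : b1 ≠ b2) (hc : c1 ≠ c2)
    (hau1 : a1 ≠ u) (hau2 : a2 ≠ u) (hbu1 : b1 ≠ u) (hbu2 : b2 ≠ u)
    (hcu1 : c1 ≠ u) (hcu2 : c2 ≠ u) :
    ∀ w : V, w = u ∨ w = n1 ∨ w = n2 ∨ w = n3 ∨ w = a1 ∨ w = a2 ∨ w = b1 ∨
      w = b2 ∨ w = c1 ∨ w = c2 := by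
  obtain ⟨d1, d2, d3, d4, d5, d6, d7, d8, d9, d10, d11, d12, d13, d14, d15, d16, d17,
    d18, d19, d20, d21, d22, d23, d24, d25, d26, d27, d28, d29, d30, d31, d32, d33,
    d34, d35, d36, d37, d38, d39, d40, d41, d42, d43, d44, d45⟩ :=
    dpack G ntri hcn u n1 n2 n3 a1 a2 b1 b2 c1 c2 e1 e2 e3 e4 e5 e6 e7 e8 e9
      hn12 hn13 hn23 ha hb hc hau1 hau2 hbu1 hbu2 hcu1 hcu2
  have hScard : ({u, n1, n2, n3, a1, a2, b1, b2, c1, c2} : Finset V).card = 10 := by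
    rw [Finset.card_insert_of_notMem (by simp [d1, d2, d3, d4, d5, d6, d7, d8, d9]),
      Finset.card_insert_of_notMem (by simp [d10, d11, d12, d13, d14, d15, d16, d17]),
      Finset.card_insert_of_notMem (by simp [d18, d19, d20, d21, d22, d23, d24]),
      Finset.card_insert_of_notMem (by simp [d25, d26, d27, d28, d29, d30]),
      Finset.card_insert_of_notMem (by simp [d31, d32, d33, d34, d35]),
      Finset.card_insert_of_notMem (by simp [d36, d37, d38, d39]),
      Finset.card_insert_of_notMem (by simp [d40, d41, d42]),
      Finset.card_insert_of_notMem (by simp [d43, d44]),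
      Finset.card_insert_of_notMem (by simp [d45]),
      Finset.card_singleton]
  have hS : ({u, n1, n2, n3, a1, a2, b1, b2, c1, c2} : Finset V) = Finset.univ :=
    Finset.eq_univ_of_card _ (by rw [hScard, hcard])
  intro w
  have hw : w ∈ ({u, n1, n2, n3, a1, a2, b1, b2, c1, c2} : Finset V) := by
    rw [hS]; exact Finset.mem_univ w
  simpa using hw

end Hall
section Aux

variable {V : Type} [Fintype V] [DecidableEq V] (G : SimpleGraph V) [DecidableRel G.Adj]

set_option linter.unusedSectionVars false in
set_option maxHeartbeats 1000000 in
lemma aux2 (hcard : Fintype.card V = 10) (hreg : G.IsRegularOfDegree 3)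
    (ntri : ∀ x y z : V, G.Adj x y → G.Adj y z → G.Adj z x → False)
    (hcn : ∀ x y p q : V, x ≠ y → G.Adj p x → G.Adj p y → G.Adj q x → G.Adj q y → p = q)
    (u n1 n2 n3 a1 a2 b1 b2 c1 c2 : V)
    (e1 : G.Adj u n1) (e2 : G.Adj u n2) (e3 : G.Adj u n3)
    (e4 : G.Adj n1 a1) (e5 : G.Adj n1 a2) (e6 : G.Adj n2 b1) (e7 : G.Adj n2 b2)
    (e8 : G.Adj n3 c1) (e9 : G.Adj n3 c2)
    (hn12 : n1 ≠ n2) (hn13 : n1 ≠ n3) (hn23 : n2 ≠ n3)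
    (ha : a1 ≠ a2) (hb : b1 ≠ b2) (hc : c1 ≠ c2)
    (hau1 : a1 ≠ u) (hau2 : a2 ≠ u) (hbu1 : b1 ≠ u) (hbu2 : b2 ≠ u)
    (hcu1 : c1 ≠ u) (hcu2 : c2 ≠ u)
    (hab : G.Adj a1 b1) (hac : G.Adj a1 c1) :
    Nonempty (G ≃g petersen) := by
  obtain ⟨d1, d2, d3, d4, d5, d6, d7, d8, d9, d10, d11, d12, d13, d14, d15, d16, d17,
    d18, d19, d20, d21, d22, d23, d24, d25, d26, d27, d28, d29, d30, d31, d32, d33,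
    d34, d35, d36, d37, d38, d39, d40, d41, d42, d43, d44, d45⟩ :=
    dpack G ntri hcn u n1 n2 n3 a1 a2 b1 b2 c1 c2 e1 e2 e3 e4 e5 e6 e7 e8 e9
      hn12 hn13 hn23 ha hb hc hau1 hau2 hbu1 hbu2 hcu1 hcu2
  have hall := hallpack G hcard ntri hcn u n1 n2 n3 a1 a2 b1 b2 c1 c2
    e1 e2 e3 e4 e5 e6 e7 e8 e9 hn12 hn13 hn23 ha hb hc hau1 hau2 hbu1 hbu2 hcu1 hcu2
  have sub_a2 : ∀ w, G.Adj a2 w → w = n1 ∨ w = b1 ∨ w = b2 ∨ w = c1 ∨ w = c2 := by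
    intro w hw
    rcases hall w with h|h|h|h|h|h|h|h|h|h
    · exact (ntri u n1 a2 e1 e5 (h ▸ hw)).elim
    · exact Or.inl h
    · exact (hau2 (hcn n1 n2 u a2 hn12 e1 e2 e5.symm (h ▸ hw)).symm).elim
    · exact (hau2 (hcn n1 n3 u a2 hn13 e1 e3 e5.symm (h ▸ hw)).symm).elim
    · exact (ntri n1 a1 a2 e4 (h ▸ hw).symm e5.symm).elim
    · exact (G.loopless.irrefl a2 (h ▸ hw)).elim
    · exact Or.inr (Or.inl h)
    · exact Or.inr (Or.inr (Or.inl h))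
    · exact Or.inr (Or.inr (Or.inr (Or.inl h)))
    · exact Or.inr (Or.inr (Or.inr (Or.inr h)))
  obtain ⟨hb2', hc2'⟩ := force5 (hreg a2) sub_a2
    (by rintro ⟨x1, x2⟩; exact d20 (hcn b1 b2 n2 a2 d40 e6 e7 x1 x2))
    (by rintro ⟨x1, x2⟩; exact d26 (hcn c1 c2 n3 a2 d45 e8 e9 x1 x2))
  have e12 : G.Adj a2 b2 := by
    rcases hb2' with h|h
    · exact absurd (hcn a1 a2 n1 b1 d31 e4 e5 hab.symm h.symm) d14
    · exact h
  have e13 : G.Adj a2 c2 := by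
    rcases hc2' with h|h
    · exact absurd (hcn a1 a2 n1 c1 d31 e4 e5 hac.symm h.symm) d16
    · exact h
  have sub_b1 : ∀ w, G.Adj b1 w → w = n2 ∨ w = a1 ∨ w = c1 ∨ w = c2 := by
    intro w hw
    rcases hall w with h|h|h|h|h|h|h|h|h|h
    · exact (ntri u n2 b1 e2 e6 (h ▸ hw)).elim
    · exact (hbu1 (hcn n1 n2 u b1 hn12 e1 e2 (h ▸ hw) e6.symm).symm).elim
    · exact Or.inl h
    · exact (hbu1 (hcn n2 n3 u b1 hn23 e2 e3 e6.symm (h ▸ hw)).symm).elim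
    · exact Or.inr (Or.inl h)
    · exact absurd (hcn a1 a2 n1 b1 d31 e4 e5 hab.symm (h ▸ hw)) d14
    · exact (G.loopless.irrefl b1 (h ▸ hw)).elim
    · exact (ntri n2 b1 b2 e6 (h ▸ hw) e7.symm).elim
    · exact Or.inr (Or.inr (Or.inl h))
    · exact Or.inr (Or.inr (Or.inr h))
  have hb1c := force_pair (hreg b1) sub_b1
    (by rintro ⟨x1, x2⟩; exact d27 (hcn c1 c2 n3 b1 d45 e8 e9 x1 x2))
  have e14 : G.Adj b1 c2 := by
    rcases hb1c with h|h
    · exact (ntri a1 b1 c1 hab h hac.symm).elim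
    · exact h
  have sub_b2 : ∀ w, G.Adj b2 w → w = n2 ∨ w = a2 ∨ w = c1 ∨ w = c2 := by
    intro w hw
    rcases hall w with h|h|h|h|h|h|h|h|h|h
    · exact (ntri u n2 b2 e2 e7 (h ▸ hw)).elim
    · exact (hbu2 (hcn n1 n2 u b2 hn12 e1 e2 (h ▸ hw) e7.symm).symm).elim
    · exact Or.inl h
    · exact (hbu2 (hcn n2 n3 u b2 hn23 e2 e3 e7.symm (h ▸ hw)).symm).elim
    · exact absurd (hcn b1 b2 n2 a1 d40 e6 e7 hab (h ▸ hw).symm) d19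
    · exact Or.inr (Or.inl h)
    · exact (ntri n2 b1 b2 e6 (h ▸ hw).symm e7.symm).elim
    · exact (G.loopless.irrefl b2 (h ▸ hw)).elim
    · exact Or.inr (Or.inr (Or.inl h))
    · exact Or.inr (Or.inr (Or.inr h))
  have hb2c := force_pair (hreg b2) sub_b2
    (by rintro ⟨x1, x2⟩; exact d28 (hcn c1 c2 n3 b2 d45 e8 e9 x1 x2))
  have e15 : G.Adj b2 c1 := by
    rcases hb2c with h|h
    · exact h
    · exact (ntri a2 b2 c2 e12 h e13.symm).elim
  exact build G hcard hreg u n1 n2 n3 a1 a2 b1 b2 c1 c2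
    d1 d2 d3 d4 d5 d6 d7 d8 d9 d10 d11 d12 d13 d14 d15 d16 d17 d18 d19 d20 d21 d22
    d23 d24 d25 d26 d27 d28 d29 d30 d31 d32 d33 d34 d35 d36 d37 d38 d39 d40 d41 d42
    d43 d44 d45 e1 e2 e3 e4 e5 e6 e7 e8 e9 hab hac e12 e13 e14 e15

set_option linter.unusedSectionVars false in
set_option maxHeartbeats 1000000 in
lemma aux1 (hcard : Fintype.card V = 10) (hreg : G.IsRegularOfDegree 3)
    (ntri : ∀ x y z : V, G.Adj x y → G.Adj y z → G.Adj z x → False)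
    (hcn : ∀ x y p q : V, x ≠ y → G.Adj p x → G.Adj p y → G.Adj q x → G.Adj q y → p = q)
    (u n1 n2 n3 a1 a2 b1 b2 c1 c2 : V)
    (e1 : G.Adj u n1) (e2 : G.Adj u n2) (e3 : G.Adj u n3)
    (e4 : G.Adj n1 a1) (e5 : G.Adj n1 a2) (e6 : G.Adj n2 b1) (e7 : G.Adj n2 b2)
    (e8 : G.Adj n3 c1) (e9 : G.Adj n3 c2)
    (hn12 : n1 ≠ n2) (hn13 : n1 ≠ n3) (hn23 : n2 ≠ n3)
    (ha : a1 ≠ a2) (hb : b1 ≠ b2) (hc : c1 ≠ c2)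
    (hau1 : a1 ≠ u) (hau2 : a2 ≠ u) (hbu1 : b1 ≠ u) (hbu2 : b2 ≠ u)
    (hcu1 : c1 ≠ u) (hcu2 : c2 ≠ u) :
    Nonempty (G ≃g petersen) := by
  obtain ⟨d1, d2, d3, d4, d5, d6, d7, d8, d9, d10, d11, d12, d13, d14, d15, d16, d17,
    d18, d19, d20, d21, d22, d23, d24, d25, d26, d27, d28, d29, d30, d31, d32, d33,
    d34, d35, d36, d37, d38, d39, d40, d41, d42, d43, d44, d45⟩ :=
    dpack G ntri hcn u n1 n2 n3 a1 a2 b1 b2 c1 c2 e1 e2 e3 e4 e5 e6 e7 e8 e9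
      hn12 hn13 hn23 ha hb hc hau1 hau2 hbu1 hbu2 hcu1 hcu2
  have hall := hallpack G hcard ntri hcn u n1 n2 n3 a1 a2 b1 b2 c1 c2
    e1 e2 e3 e4 e5 e6 e7 e8 e9 hn12 hn13 hn23 ha hb hc hau1 hau2 hbu1 hbu2 hcu1 hcu2
  have sub_a1 : ∀ w, G.Adj a1 w → w = n1 ∨ w = b1 ∨ w = b2 ∨ w = c1 ∨ w = c2 := by
    intro w hw
    rcases hall w with h|h|h|h|h|h|h|h|h|h
    · exact (ntri u n1 a1 e1 e4 (h ▸ hw)).elim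
    · exact Or.inl h
    · exact (hau1 (hcn n1 n2 u a1 hn12 e1 e2 e4.symm (h ▸ hw)).symm).elim
    · exact (hau1 (hcn n1 n3 u a1 hn13 e1 e3 e4.symm (h ▸ hw)).symm).elim
    · exact (G.loopless.irrefl a1 (h ▸ hw)).elim
    · exact (ntri n1 a1 a2 e4 (h ▸ hw) e5.symm).elim
    · exact Or.inr (Or.inl h)
    · exact Or.inr (Or.inr (Or.inl h))
    · exact Or.inr (Or.inr (Or.inr (Or.inl h)))
    · exact Or.inr (Or.inr (Or.inr (Or.inr h)))
  obtain ⟨hbx, hcx⟩ := force5 (hreg a1) sub_a1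
    (by rintro ⟨x1, x2⟩; exact d19 (hcn b1 b2 n2 a1 d40 e6 e7 x1 x2))
    (by rintro ⟨x1, x2⟩; exact d25 (hcn c1 c2 n3 a1 d45 e8 e9 x1 x2))
  rcases hbx with hab|hab <;> rcases hcx with hac|hac
  · exact aux2 G hcard hreg ntri hcn u n1 n2 n3 a1 a2 b1 b2 c1 c2
      e1 e2 e3 e4 e5 e6 e7 e8 e9 hn12 hn13 hn23 ha hb hc
      hau1 hau2 hbu1 hbu2 hcu1 hcu2 hab hac
  · exact aux2 G hcard hreg ntri hcn u n1 n2 n3 a1 a2 b1 b2 c2 c1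
      e1 e2 e3 e4 e5 e6 e7 e9 e8 hn12 hn13 hn23 ha hb hc.symm
      hau1 hau2 hbu1 hbu2 hcu2 hcu1 hab hac
  · exact aux2 G hcard hreg ntri hcn u n1 n2 n3 a1 a2 b2 b1 c1 c2
      e1 e2 e3 e4 e5 e7 e6 e8 e9 hn12 hn13 hn23 ha hb.symm hc
      hau1 hau2 hbu2 hbu1 hcu1 hcu2 hab hac
  · exact aux2 G hcard hreg ntri hcn u n1 n2 n3 a1 a2 b2 b1 c2 c1
      e1 e2 e3 e4 e5 e7 e6 e9 e8 hn12 hn13 hn23 ha hb.symm hc.symm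
      hau1 hau2 hbu2 hbu1 hcu2 hcu1 hab hac

end Aux
/-- The Petersen graph is the unique cubic graph on 10 vertices with girth 5. -/
theorem stmt_14 :
    (Fintype.card {s : Finset (Fin 5) // s.card = 2} = 10 ∧
      petersen.IsRegularOfDegree 3 ∧ petersen.egirth = 5) ∧
    ∀ {V : Type} [Fintype V] (G : SimpleGraph V) [DecidableRel G.Adj],
      Fintype.card V = 10 → G.IsRegularOfDegree 3 → G.egirth = 5 →
      Nonempty (G ≃g petersen) := by
  constructor
  · refine ⟨by decide, ?_, ?_⟩
    · intro v; revert v; show ∀ v, petersen.degree v = 3; decide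
    · apply le_antisymm
      · obtain ⟨w, hw, hl⟩ := cycle5 (G := petersen) (a := v01) (b := v23) (c := v04)
          (d := v12) (e := v34) (by decide) (by decide) (by decide) (by decide)
          (by decide) (by decide) (by decide) (by decide) (by decide) (by decide)
        have h := my_egirth_le w hw
        rw [hl] at h
        exact_mod_cast h
      · rw [SimpleGraph.le_egirth]
        intro a w hw
        have h3 := hw.three_le_length
        have hn3 : w.length ≠ 3 := by
          intro hl
          obtain ⟨x, y, z, h1, h2, h3'⟩ := tri_of_len3 hl
          exact (by decide : ¬∃ x y z, petersen.Adj x y ∧ petersen.Adj y z ∧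
            petersen.Adj z x) ⟨x, y, z, h1, h2, h3'⟩
        have hn4 : w.length ≠ 4 := by
          intro hl
          obtain ⟨x, y, z, t, h1, h2, h3', h4, h5, h6⟩ := quad_of_len4 hw hl
          exact (by decide : ¬∃ x y z t, petersen.Adj x y ∧ petersen.Adj y z ∧
            petersen.Adj z t ∧ petersen.Adj t x ∧ x ≠ z ∧ y ≠ t)
            ⟨x, y, z, t, h1, h2, h3', h4, h5, h6⟩
        exact_mod_cast (by omega : 5 ≤ w.length)
  · intro V _ G _ hcard hreg hgirth
    haveI : DecidableEq V := Classical.decEq V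
    have hge : ∀ (a : V) (w : G.Walk a a), w.IsCycle → (5 : ℕ∞) ≤ w.length :=
      SimpleGraph.le_egirth.mp hgirth.ge
    have ntri : ∀ x y z : V, G.Adj x y → G.Adj y z → G.Adj z x → False := by
      intro x y z h1 h2 h3
      obtain ⟨w, hw, hl⟩ := cycle3 h1 h2 h3
      have h := hge x w hw
      rw [hl] at h
      have h' : (5 : ℕ) ≤ 3 := by exact_mod_cast h
      omega
    have nquad : ∀ x y z t : V, G.Adj x y → G.Adj y z → G.Adj z t → G.Adj t x →
        x ≠ z → y ≠ t → False := by
      intro x y z t h1 h2 h3 h4 hxz hyt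
      obtain ⟨w, hw, hl⟩ := cycle4 h1 h2 h3 h4 hxz hyt
      have h := hge x w hw
      rw [hl] at h
      have h' : (5 : ℕ) ≤ 4 := by exact_mod_cast h
      omega
    have hcn : ∀ x y p q : V, x ≠ y → G.Adj p x → G.Adj p y → G.Adj q x →
        G.Adj q y → p = q := by
      intro x y p q hxy h1 h2 h3 h4
      by_contra hpq
      exact nquad p x q y h1 h3.symm h4 h2.symm hpq hxy
    obtain ⟨u⟩ : Nonempty V := Fintype.card_pos_iff.mp (by rw [hcard]; norm_num)
    have hNu : (G.neighborFinset u).card = 3 := hreg u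
    obtain ⟨n1, n2, n3, hn12, hn13, hn23, hNset⟩ := Finset.card_eq_three.mp hNu
    have e1 : G.Adj u n1 := by
      rw [← SimpleGraph.mem_neighborFinset, hNset]; simp
    have e2 : G.Adj u n2 := by
      rw [← SimpleGraph.mem_neighborFinset, hNset]; simp
    have e3 : G.Adj u n3 := by
      rw [← SimpleGraph.mem_neighborFinset, hNset]; simp
    have hca : ((G.neighborFinset n1).erase u).card = 2 := by
      rw [Finset.card_erase_of_mem (by rw [SimpleGraph.mem_neighborFinset]; exact e1.symm)]
      have : (G.neighborFinset n1).card = 3 := hreg n1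
      omega
    obtain ⟨a1, a2, ha, hseta⟩ := Finset.card_eq_two.mp hca
    have ha1 : a1 ∈ (G.neighborFinset n1).erase u := by rw [hseta]; simp
    have ha2 : a2 ∈ (G.neighborFinset n1).erase u := by rw [hseta]; simp
    obtain ⟨hau1, he4⟩ := Finset.mem_erase.mp ha1
    obtain ⟨hau2, he5⟩ := Finset.mem_erase.mp ha2
    have e4 : G.Adj n1 a1 := (SimpleGraph.mem_neighborFinset _ _ _).mp he4
    have e5 : G.Adj n1 a2 := (SimpleGraph.mem_neighborFinset _ _ _).mp he5
    have hcb : ((G.neighborFinset n2).erase u).card = 2 := by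
      rw [Finset.card_erase_of_mem (by rw [SimpleGraph.mem_neighborFinset]; exact e2.symm)]
      have : (G.neighborFinset n2).card = 3 := hreg n2
      omega
    obtain ⟨b1, b2, hb, hsetb⟩ := Finset.card_eq_two.mp hcb
    have hb1 : b1 ∈ (G.neighborFinset n2).erase u := by rw [hsetb]; simp
    have hb2 : b2 ∈ (G.neighborFinset n2).erase u := by rw [hsetb]; simp
    obtain ⟨hbu1, he6⟩ := Finset.mem_erase.mp hb1
    obtain ⟨hbu2, he7⟩ := Finset.mem_erase.mp hb2
    have e6 : G.Adj n2 b1 := (SimpleGraph.mem_neighborFinset _ _ _).mp he6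
    have e7 : G.Adj n2 b2 := (SimpleGraph.mem_neighborFinset _ _ _).mp he7
    have hcc : ((G.neighborFinset n3).erase u).card = 2 := by
      rw [Finset.card_erase_of_mem (by rw [SimpleGraph.mem_neighborFinset]; exact e3.symm)]
      have : (G.neighborFinset n3).card = 3 := hreg n3
      omega
    obtain ⟨c1, c2, hc, hsetc⟩ := Finset.card_eq_two.mp hcc
    have hc1 : c1 ∈ (G.neighborFinset n3).erase u := by rw [hsetc]; simp
    have hc2 : c2 ∈ (G.neighborFinset n3).erase u := by rw [hsetc]; simp
    obtain ⟨hcu1, he8⟩ := Finset.mem_erase.mp hc1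
    obtain ⟨hcu2, he9⟩ := Finset.mem_erase.mp hc2
    have e8 : G.Adj n3 c1 := (SimpleGraph.mem_neighborFinset _ _ _).mp he8
    have e9 : G.Adj n3 c2 := (SimpleGraph.mem_neighborFinset _ _ _).mp he9
    exact aux1 G hcard hreg ntri hcn u n1 n2 n3 a1 a2 b1 b2 c1 c2
      e1 e2 e3 e4 e5 e6 e7 e8 e9 hn12 hn13 hn23 ha hb hc
      hau1 hau2 hbu1 hbu2 hcu1 hcu2
end
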